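/- arXiv:2408.14652 — 11 statements merged into one kernel-verified Lean document; each statement's English description precedes it below -/
import Mathlib

section
/- Let C be a code over alphabet [q] with blocklength n such that every pair of distinct codewords has fractional Hamming distance strictly greater than 1 - 1/q^2. Then |C| ≤ q. -/
/-- A code over alphabet `[q]` with blocklength `n` in which every pair of distinct
codewords has fractional Hamming distance strictly greater than `1 - 1/q^2`
has at most `q` codewords. -/
theorem plotkin_q_squared (q n : ℕ) (hq : 0 < q) (hn : 0 < n)
    (C : Finset (Fin n → Fin q))
    (hdist : ∀ f ∈ C, ∀ g ∈ C, f ≠ g →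
      1 - 1 / (q : ℝ) ^ 2 < (hammingDist f g : ℝ) / n) :
    C.card ≤ q := by
  by_contra hcon
  push_neg at hcon
  obtain ⟨S, hSC, hScard⟩ := Finset.exists_subset_card_eq (s := C) (n := q + 1) hcon
  have hqR : (0 : ℝ) < q := by exact_mod_cast hq
  have hnR : (0 : ℝ) < n := by exact_mod_cast hn
  -- agreement count
  set A : (Fin n → Fin q) → (Fin n → Fin q) → ℕ :=
    fun f g => (Finset.univ.filter (fun i => f i = g i)).card with hA
  have hAd : ∀ f g : Fin n → Fin q, hammingDist f g + A f g = n := by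
    intro f g
    have := Finset.card_filter_add_card_filter_not
      (s := (Finset.univ : Finset (Fin n))) (p := fun i => f i = g i)
    simp only [Finset.card_univ, Fintype.card_fin] at this
    rw [hammingDist, hA]
    simp only [ne_eq]
    omega
  -- per-pair bound
  have hpair : ∀ p ∈ S.offDiag, (A p.1 p.2 : ℝ) < n / (q : ℝ) ^ 2 := by
    intro p hp
    rw [Finset.mem_offDiag] at hp
    obtain ⟨h1, h2, h3⟩ := hp
    have hd := hdist p.1 (hSC h1) p.2 (hSC h2) h3
    have hA' : (A p.1 p.2 : ℝ) = n - hammingDist p.1 p.2 := by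
      have := hAd p.1 p.2
      push_cast [← this]
      ring
    rw [hA']
    have key : (1 - 1 / (q : ℝ) ^ 2) * n < hammingDist p.1 p.2 :=
      (lt_div_iff₀ hnR).mp hd
    have heq : (1 - 1 / (q : ℝ) ^ 2) * n = n - n / (q : ℝ) ^ 2 := by ring
    linarith
  -- double counting
  have hswap : ∑ p ∈ S.offDiag, A p.1 p.2
      = ∑ i : Fin n, (S.offDiag.filter (fun p => p.1 i = p.2 i)).card := by
    have h1 : ∀ p : (Fin n → Fin q) × (Fin n → Fin q),
        A p.1 p.2 = ∑ i : Fin n, if p.1 i = p.2 i then 1 else 0 := by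
      intro p; simp only [hA]; rw [Finset.card_filter]
    have h2 : ∀ i : Fin n, (S.offDiag.filter (fun p => p.1 i = p.2 i)).card
        = ∑ p ∈ S.offDiag, if p.1 i = p.2 i then 1 else 0 := by
      intro i; rw [Finset.card_filter]
    simp only [h1, h2]
    exact Finset.sum_comm
  -- per-coordinate lower bound
  have hcoord : ∀ i : Fin n, 2 ≤ (S.offDiag.filter (fun p => p.1 i = p.2 i)).card := by
    intro i
    have hmaps : ∀ f ∈ S, (f i) ∈ (Finset.univ : Finset (Fin q)) := by simp
    have hlt : (Finset.univ : Finset (Fin q)).card < S.card := by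
      simp [hScard]
    obtain ⟨f, hf, g, hg, hfg, hval⟩ :=
      Finset.exists_ne_map_eq_of_card_lt_of_maps_to hlt hmaps
    have hmem1 : (f, g) ∈ S.offDiag.filter (fun p => p.1 i = p.2 i) := by
      simp [Finset.mem_offDiag, hf, hg, hfg, hval]
    have hmem2 : (g, f) ∈ S.offDiag.filter (fun p => p.1 i = p.2 i) := by
      simp [Finset.mem_offDiag, hf, hg, hfg.symm, hval.symm]
    have : ({(f, g), (g, f)} : Finset _) ⊆ S.offDiag.filter (fun p => p.1 i = p.2 i) := by
      intro x hx
      simp only [Finset.mem_insert, Finset.mem_singleton] at hx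
      rcases hx with rfl | rfl
      · exact hmem1
      · exact hmem2
    have hcard2 : ({(f, g), (g, f)} : Finset _).card = 2 := by
      rw [Finset.card_insert_of_notMem (by simp only [Finset.mem_singleton, Prod.mk.injEq, not_and]; exact fun h _ => hfg h),
        Finset.card_singleton]
    calc 2 = ({(f, g), (g, f)} : Finset _).card := hcard2.symm
      _ ≤ _ := Finset.card_le_card this
  -- lower bound on total (in ℕ)
  have hlow : 2 * n ≤ ∑ p ∈ S.offDiag, A p.1 p.2 := by
    rw [hswap]
    calc 2 * n = ∑ _i : Fin n, 2 := by simp [mul_comm]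
      _ ≤ _ := Finset.sum_le_sum (fun i _ => hcoord i)
  -- upper bound on total (in ℝ)
  have hoffcard : S.offDiag.card = (q + 1) * q := by
    rw [Finset.offDiag_card, hScard]
    ring_nf
    omega
  have hne : S.offDiag.Nonempty := by
    rw [← Finset.card_pos, hoffcard]
    positivity
  have hup : (∑ p ∈ S.offDiag, (A p.1 p.2 : ℝ)) < ((q : ℝ) + 1) * q * (n / (q : ℝ) ^ 2) := by
    calc (∑ p ∈ S.offDiag, (A p.1 p.2 : ℝ))
        < ∑ _p ∈ S.offDiag, (n / (q : ℝ) ^ 2) :=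
          Finset.sum_lt_sum_of_nonempty hne hpair
      _ = ((q : ℝ) + 1) * q * (n / (q : ℝ) ^ 2) := by
          rw [Finset.sum_const, hoffcard]; push_cast; ring
  have hlowR : 2 * (n : ℝ) ≤ ∑ p ∈ S.offDiag, (A p.1 p.2 : ℝ) := by
    exact_mod_cast hlow
  have hfin : ((q : ℝ) + 1) * q * (n / (q : ℝ) ^ 2) ≤ 2 * n := by
    have h1 : (1 : ℝ) ≤ q := by exact_mod_cast hq
    have heq : ((q : ℝ) + 1) * q * (n / (q : ℝ) ^ 2) = ((q : ℝ) + 1) * n / q := by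
      field_simp
    rw [heq, div_le_iff₀ hqR]
    nlinarith [mul_nonneg (by linarith : (0:ℝ) ≤ (q : ℝ) - 1) hnR.le]
  linarith
end

section
/- Let H be a finite-dimensional real inner product space, F a family of unit vectors in H, and g ∈ H a unit vector such that ⟨g, f⟩ > ε for all f ∈ F, where ε > 0. Then there exists g₀ in the convex hull of F such that ⟨g₀, f⟩ > ε² for all f ∈ F. -/
open RealInnerProductSpace

/-- Covering lemma: if a unit vector `g` has inner product greater than `ε` with every
member of a family `F` of unit vectors, then some point of the convex hull of `F`
has inner product greater than `ε²` with every member of `F`. -/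
theorem covering_lemma {H : Type*} [NormedAddCommGroup H] [InnerProductSpace ℝ H]
    [FiniteDimensional ℝ H] (F : Set H) (hF : F.Nonempty)
    (hFunit : ∀ f ∈ F, ‖f‖ = 1) (g : H) (hg : ‖g‖ = 1)
    (ε : ℝ) (hε : 0 < ε) (hcorr : ∀ f ∈ F, ε < ⟪g, f⟫) :
    ∃ g₀ ∈ convexHull ℝ F, ∀ f ∈ F, ε ^ 2 < ⟪g₀, f⟫ := by
  classical
  set K := convexHull ℝ F with hKdef
  set C := closure K with hCdef
  have hKconv : Convex ℝ K := convex_convexHull ℝ F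
  have hCconv : Convex ℝ C := hKconv.closure
  have hFK : F ⊆ K := subset_convexHull ℝ F
  have hKC : K ⊆ C := subset_closure
  have hCne : C.Nonempty := hF.mono (hFK.trans hKC)
  have hCcomplete : IsComplete C := isClosed_closure.isComplete
  -- every point of C has inner product with g at least ε
  have hhalf : ∀ x ∈ C, ε ≤ ⟪g, x⟫ := by
    have hconvS : Convex ℝ {x : H | ε ≤ ⟪g, x⟫} := by
      intro x hx y hy a b ha hb hab
      simp only [Set.mem_setOf_eq, inner_add_right, real_inner_smul_right] at *
      nlinarith
    have hclS : IsClosed {x : H | ε ≤ ⟪g, x⟫} :=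
      isClosed_le continuous_const (continuous_const.inner continuous_id)
    have h1 : K ⊆ {x : H | ε ≤ ⟪g, x⟫} :=
      convexHull_min (fun f hf => le_of_lt (hcorr f hf)) hconvS
    intro x hx
    exact closure_minimal h1 hclS hx
  -- project (3/2 ε) • g onto C
  obtain ⟨q, hqC, hqmin⟩ :=
    exists_norm_eq_iInf_of_complete_convex hCne hCcomplete hCconv (((3/2) * ε) • g)
  have hvar : ∀ w ∈ C, ⟪((3/2) * ε) • g - q, w - q⟫ ≤ 0 :=
    (norm_eq_iInf_iff_real_inner_le_zero hCconv hqC).mp hqmin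
  set s : ℝ := ‖q‖ with hs
  have ha1 : ε ≤ ⟪g, q⟫ := hhalf q hqC
  have ha2 : ⟪g, q⟫ ≤ s := by
    calc ⟪g, q⟫ ≤ ‖g‖ * ‖q‖ := real_inner_le_norm g q
    _ = s := by rw [hg, one_mul]
  have hsε : ε ≤ s := ha1.trans ha2
  obtain ⟨f₀, hf₀⟩ := hF
  -- s > ε
  have hslt : ε < s := by
    rcases lt_or_eq_of_le hsε with h | h
    · exact h
    · exfalso
      have haeq : ⟪g, q⟫ = ‖g‖ * ‖q‖ := by rw [hg, one_mul, ← hs, ← h]; linarith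
      have : ‖q‖ • g = ‖g‖ • q := inner_eq_norm_mul_iff_real.mp haeq
      rw [hg, ← hs, ← h, one_smul] at this
      -- q = ε • g
      have hq : q = ε • g := this.symm
      have := hvar f₀ (hKC (hFK hf₀))
      rw [hq] at this
      have hexp : ((3/2) * ε) • g - ε • g = (ε/2) • g := by
        rw [← sub_smul]; ring_nf
      rw [hexp, real_inner_smul_left, inner_sub_right, real_inner_smul_right,
        real_inner_self_eq_norm_sq, hg] at this
      have := hcorr f₀ hf₀
      nlinarith
  set δ₀ : ℝ := (s - ε) * (s - ε/2) with hδ₀def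
  have hδ₀pos : 0 < δ₀ := by
    apply mul_pos <;> nlinarith
  -- for every f ∈ F, ⟪q, f⟫ ≥ ε² + δ₀
  have hqf : ∀ f ∈ F, ε ^ 2 + δ₀ ≤ ⟪q, f⟫ := by
    intro f hf
    have h1 := hvar f (hKC (hFK hf))
    rw [inner_sub_left, inner_sub_right, inner_sub_right, real_inner_smul_left,
      real_inner_smul_left, real_inner_self_eq_norm_sq] at h1
    have h2 : ε ≤ ⟪g, f⟫ := le_of_lt (hcorr f hf)
    have h3 : ⟪q, g⟫ = ⟪g, q⟫ := real_inner_comm g q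
    have h4 : ⟪q, f⟫ = ⟪f, q⟫ := real_inner_comm f q
    nlinarith [ha1, ha2, hsε]
  -- pick a point of the hull δ₀-close to q
  obtain ⟨u, huK, hud⟩ := Metric.mem_closure_iff.mp hqC δ₀ hδ₀pos
  refine ⟨u, huK, fun f hf => ?_⟩
  have h5 : ⟪q - u, f⟫ ≤ ‖q - u‖ * ‖f‖ := real_inner_le_norm _ _
  rw [hFunit f hf, mul_one] at h5
  have h6 : ‖q - u‖ < δ₀ := by rw [← dist_eq_norm]; exact hud
  have h7 := hqf f hf
  have h8 : ⟪q, f⟫ - ⟪u, f⟫ = ⟪q - u, f⟫ := (inner_sub_left q u f).symm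
  linarith
end

section
/- Let C ⊆ [q]^n be a code with minimum fractional distance at least (1 - 1/q)(1 - β) for some β ∈ [0,1]. Then for every g ∈ [q]^n, the number of codewords h ∈ C with Δ(g,h) < (1 - 1/q)(1 - √β) is at most (q-1)·n + 1. -/
open Finset

section JohnsonAux

lemma neg_inner_card' {E : Type*} [NormedAddCommGroup E] [InnerProductSpace ℝ E]
    [FiniteDimensional ℝ E] (S : Submodule ℝ E) (s : Finset E)
    (hS : ∀ v ∈ s, v ∈ S)
    (hneg : ∀ v₁ ∈ s, ∀ v₂ ∈ s, v₁ ≠ v₂ → inner ℝ v₁ v₂ < (0:ℝ)) :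
    s.card ≤ Module.finrank ℝ S + 1 := by
  classical
  rcases s.eq_empty_or_nonempty with h | ⟨v0, hv0⟩
  · simp [h]
  set t := s.erase v0 with ht
  have hts : ∀ v ∈ t, v ∈ s := fun v hv => mem_of_mem_erase hv
  have hli : LinearIndependent ℝ ((↑) : t → E) := by
    rw [linearIndependent_iff']
    intro s' c hsum i his
    set P := s'.filter (fun i => 0 < c i) with hP
    set N := s'.filter (fun i => c i < 0) with hN
    have hPN : Disjoint P N := by
      simp only [hP, hN, disjoint_filter]
      intro x _ hx
      linarith
    have hsplit : (∑ i ∈ P, c i • (i:E)) + (∑ i ∈ N, c i • (i:E)) = 0 := by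
      rw [← Finset.sum_union hPN, ← hsum]
      apply Finset.sum_subset
      · exact Finset.union_subset (filter_subset _ _) (filter_subset _ _)
      · intro x hx hnx
        have h1 : ¬ (0 < c x) := fun h => hnx (Finset.mem_union_left _ (mem_filter.2 ⟨hx, h⟩))
        have h2 : ¬ (c x < 0) := fun h => hnx (Finset.mem_union_right _ (mem_filter.2 ⟨hx, h⟩))
        have : c x = 0 := le_antisymm (not_lt.1 h1) (not_lt.1 h2)
        simp [this]
    set w : E := ∑ i ∈ P, c i • (i:E) with hw
    have hwN : w = ∑ i ∈ N, (-(c i)) • (i:E) := by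
      have : w = -(∑ i ∈ N, c i • (i:E)) := by
        rw [hw]; linear_combination (norm := abel) hsplit
      rw [this, ← Finset.sum_neg_distrib]
      exact Finset.sum_congr rfl (fun i _ => by rw [neg_smul])
    have hinner : inner ℝ w w ≤ (0:ℝ) := by
      nth_rewrite 2 [hwN]
      rw [hw, sum_inner]
      apply Finset.sum_nonpos
      intro i hi
      rw [inner_sum]
      apply Finset.sum_nonpos
      intro j hj
      rw [real_inner_smul_left, real_inner_smul_right]
      have hci : 0 < c i := (mem_filter.1 hi).2
      have hcj : c j < 0 := (mem_filter.1 hj).2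
      have hij : (i:E) ≠ (j:E) := by
        intro hEq
        have : i = j := Subtype.coe_injective hEq
        rw [this] at hci; linarith
      have hin := hneg _ (hts _ i.2) _ (hts _ j.2) hij
      exact le_of_lt (mul_neg_of_pos_of_neg hci
        (mul_neg_of_pos_of_neg (neg_pos.2 hcj) hin))
    have hw0 : w = 0 := by
      rw [← @inner_self_eq_zero ℝ]
      exact le_antisymm hinner real_inner_self_nonneg
    have hv0neg : ∀ i : t, inner ℝ v0 (i:E) < (0:ℝ) := by
      intro i
      refine hneg _ hv0 _ (hts _ i.2) ?_
      exact fun hEq => (Finset.ne_of_mem_erase i.2) hEq.symm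
    have hPempty : P = ∅ := by
      by_contra hne
      have hne' : P.Nonempty := Finset.nonempty_of_ne_empty hne
      have h0 : inner ℝ v0 w = (0:ℝ) := by rw [hw0, inner_zero_right]
      rw [hw, inner_sum] at h0
      have : ∑ i ∈ P, inner ℝ v0 (c i • (i:E)) < (0:ℝ) := by
        apply Finset.sum_neg ?_ hne'
        intro i hi
        rw [real_inner_smul_right]
        have hci : 0 < c i := (mem_filter.1 hi).2
        exact mul_neg_of_pos_of_neg hci (hv0neg i)
      linarith
    have hNempty : N = ∅ := by
      by_contra hne
      have hne' : N.Nonempty := Finset.nonempty_of_ne_empty hne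
      have h0 : inner ℝ v0 w = (0:ℝ) := by rw [hw0, inner_zero_right]
      rw [hwN, inner_sum] at h0
      have : ∑ i ∈ N, inner ℝ v0 ((-(c i)) • (i:E)) < (0:ℝ) := by
        apply Finset.sum_neg ?_ hne'
        intro i hi
        rw [real_inner_smul_right]
        have hci : c i < 0 := (mem_filter.1 hi).2
        exact mul_neg_of_pos_of_neg (by linarith) (hv0neg i)
      linarith
    have h1 : i ∉ P := by rw [hPempty]; exact notMem_empty i
    have h2 : i ∉ N := by rw [hNempty]; exact notMem_empty i
    simp only [hP, hN, mem_filter, his, true_and, not_lt] at h1 h2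
    linarith
  have hcard : t.card ≤ Module.finrank ℝ S := by
    rw [← finrank_span_finset_eq_card hli]
    apply Submodule.finrank_mono
    rw [Submodule.span_le]
    intro v hv
    exact hS v (hts v hv)
  have : s.card = t.card + 1 := by
    rw [ht, Finset.card_erase_of_mem hv0]
    have := Finset.card_pos.2 ⟨v0, hv0⟩
    omega
  omega

end JohnsonAux

open Finset

open Finset

noncomputable def Wvec (q n : ℕ) (f : Fin n → Fin q) : EuclideanSpace ℝ (Fin n × Fin q) :=
  WithLp.toLp 2 fun p => (if f p.1 = p.2 then (1:ℝ) else 0) - 1/q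

noncomputable def Tmap (q n : ℕ) : EuclideanSpace ℝ (Fin n × Fin q) →ₗ[ℝ] (Fin n → ℝ) where
  toFun v := fun x => ∑ j : Fin q, v (x, j)
  map_add' v w := by ext x; simp [Finset.sum_add_distrib]
  map_smul' c v := by ext x; simp [Finset.mul_sum]

lemma finrank_ker_Tmap (q n : ℕ) (hq : 0 < q) :
    Module.finrank ℝ (LinearMap.ker (Tmap q n)) = n * q - n := by
  have hsurj : Function.Surjective (Tmap q n) := by
    intro u
    refine ⟨WithLp.toLp 2 (fun p : Fin n × Fin q => if p.2 = ⟨0, hq⟩ then u p.1 else 0), ?_⟩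
    ext x
    simp [Tmap]
  have hrn := LinearMap.finrank_range_add_finrank_ker (Tmap q n)
  rw [LinearMap.range_eq_top.2 hsurj, finrank_top] at hrn
  have h1 : Module.finrank ℝ (EuclideanSpace ℝ (Fin n × Fin q)) = n * q := by
    rw [finrank_euclideanSpace]; simp
  have h2 : Module.finrank ℝ (Fin n → ℝ) = n := by simp
  rw [h1, h2] at hrn
  omega

lemma Wvec_mem_ker (q n : ℕ) (hq : 0 < q) (f : Fin n → Fin q) :
    Wvec q n f ∈ LinearMap.ker (Tmap q n) := by
  have hq' : (q:ℝ) ≠ 0 := Nat.cast_ne_zero.2 hq.ne'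
  rw [LinearMap.mem_ker]
  ext x
  simp only [Tmap, LinearMap.coe_mk, AddHom.coe_mk, Wvec, PiLp.toLp_apply, Pi.zero_apply]
  rw [Finset.sum_sub_distrib, Finset.sum_ite_eq, Finset.sum_const]
  simp only [Finset.mem_univ, if_true, Finset.card_univ, Fintype.card_fin, nsmul_eq_mul]
  field_simp
  ring

lemma Wvec_injective (q n : ℕ) (hq : 0 < q) : Function.Injective (Wvec q n) := by
  intro f f' h
  funext x
  have := congrArg (fun v => v (x, f x)) h
  simp only [Wvec, PiLp.toLp_apply] at this
  by_cases hc : f' x = f x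
  · exact hc.symm
  · simp [hc] at this

open Finset

lemma inner_Wvec (q n : ℕ) (hq : 0 < q) (f f' : Fin n → Fin q) :
    inner ℝ (Wvec q n f) (Wvec q n f') = (n : ℝ) - (hammingDist f f' : ℝ) - n / q := by
  have hq' : (q:ℝ) ≠ 0 := Nat.cast_ne_zero.2 hq.ne'
  rw [PiLp.inner_apply]
  simp only [RCLike.inner_apply', conj_trivial]
  rw [Fintype.sum_prod_type]
  have hx : ∀ x : Fin n, ∑ j : Fin q, (Wvec q n f (x,j)) * (Wvec q n f' (x,j))
      = (if f x = f' x then (1:ℝ) else 0) - 1/q := by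
    intro x
    have e1 : ∀ j : Fin q, (Wvec q n f (x,j)) * (Wvec q n f' (x,j))
        = (if f x = j then (if f' x = j then (1:ℝ) else 0) else 0)
          - (1/q) * (if f x = j then (1:ℝ) else 0)
          - (1/q) * (if f' x = j then (1:ℝ) else 0) + (1/q) * (1/q) := by
      intro j
      simp only [Wvec, PiLp.toLp_apply]
      by_cases h1 : f x = j <;> by_cases h2 : f' x = j <;> simp [h1, h2] <;> ring
    rw [Finset.sum_congr rfl (fun j _ => e1 j)]
    rw [Finset.sum_add_distrib, Finset.sum_sub_distrib, Finset.sum_sub_distrib,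
      ← Finset.mul_sum, ← Finset.mul_sum, Finset.sum_ite_eq, Finset.sum_ite_eq,
      Finset.sum_ite_eq, Finset.sum_const]
    simp only [Finset.mem_univ, if_true, Finset.card_univ, Fintype.card_fin,
      nsmul_eq_mul, mul_one]
    have : (if f' x = f x then (1:ℝ) else 0) = (if f x = f' x then (1:ℝ) else 0) := by
      simp [eq_comm]
    rw [this]
    field_simp
    ring
  rw [Finset.sum_congr rfl (fun x _ => hx x), Finset.sum_sub_distrib, Finset.sum_boole,
    Finset.sum_const]
  have hnat : (univ.filter (fun x => f x = f' x)).card + hammingDist f f' = n := by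
    have : hammingDist f f' = (univ.filter (fun x => ¬ (f x = f' x))).card := by
      simp [hammingDist, Finset.filter_congr_decidable]
    rw [this]
    simpa using Finset.card_filter_add_card_filter_not
      (s := (univ : Finset (Fin n))) (p := fun x => f x = f' x)
  have : ((univ.filter (fun x => f x = f' x)).card : ℝ) = (n:ℝ) - hammingDist f f' := by
    have := congrArg (Nat.cast (R := ℝ)) hnat
    push_cast at this
    linarith
  rw [this]
  simp only [Finset.card_univ, Fintype.card_fin, nsmul_eq_mul, mul_one]
  ring


/-- q-ary Johnson bound: a code of fractional distance at least `(1 - 1/q)(1 - β)`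
has at most `(q-1)·n + 1` codewords within fractional distance
`(1 - 1/q)(1 - √β)` of any received word `g`. -/
theorem johnson_bound (q n : ℕ) (hq : 0 < q) (hn : 0 < n)
    (β : ℝ) (hβ0 : 0 ≤ β) (hβ1 : β ≤ 1)
    (C : Finset (Fin n → Fin q))
    (hdist : ∀ h₁ ∈ C, ∀ h₂ ∈ C, h₁ ≠ h₂ →
      (1 - 1 / (q : ℝ)) * (1 - β) ≤ (hammingDist h₁ h₂ : ℝ) / n)
    (g : Fin n → Fin q) :
    (C.filter (fun h =>
        (hammingDist g h : ℝ) / n < (1 - 1 / (q : ℝ)) * (1 - Real.sqrt β))).card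
      ≤ (q - 1) * n + 1 := by
  classical
  rcases Nat.lt_or_ge q 2 with hq1 | hq2
  · have hq1' : q = 1 := by omega
    subst hq1'
    have hcard : (C.filter (fun h =>
        (hammingDist g h : ℝ) / n < (1 - 1 / ((1:ℕ) : ℝ)) * (1 - Real.sqrt β))).card ≤ 1 :=
      Finset.card_le_one.2 (fun a _ b _ => funext fun x => Subsingleton.elim _ _)
    omega
  -- main case q ≥ 2
  have hq' : (q:ℝ) ≠ 0 := Nat.cast_ne_zero.2 hq.ne'
  have hqr : (2:ℝ) ≤ q := by exact_mod_cast hq2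
  have hnpos : (0:ℝ) < n := by exact_mod_cast hn
  set R : ℝ := (1 - 1 / (q : ℝ)) * (1 - Real.sqrt β) with hR
  set F := C.filter (fun h => (hammingDist g h : ℝ) / n < R) with hF
  rcases F.eq_empty_or_nonempty with hFe | hFne
  · rw [hFe]; simp
  obtain ⟨h0, hh0, hsup⟩ := F.exists_mem_eq_sup' hFne (fun h => (hammingDist g h : ℝ) / n)
  set ε : ℝ := R - (hammingDist g h0 : ℝ) / n with hε
  have hεpos : 0 < ε := by
    have := (Finset.mem_filter.1 hh0).2
    simp only [hε]; linarith
  have hle : ∀ h ∈ F, (hammingDist g h : ℝ) / n ≤ R - ε := by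
    intro h hh
    have := Finset.le_sup' (fun h => (hammingDist g h : ℝ) / n) hh
    rw [hsup] at this
    simp only [hε]; linarith
  set lam : ℝ := Real.sqrt β + ε with hlam
  have hsb : 0 ≤ Real.sqrt β := Real.sqrt_nonneg β
  have hlampos : 0 < lam := by rw [hlam]; positivity
  set s : Finset (EuclideanSpace ℝ (Fin n × Fin q)) :=
    F.image (fun h => Wvec q n h - lam • Wvec q n g) with hs
  have hinj : Function.Injective (fun h : Fin n → Fin q => Wvec q n h - lam • Wvec q n g) := by
    intro a b hab
    exact Wvec_injective q n hq (by simpa using sub_left_injective hab)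
  have hscard : s.card = F.card := Finset.card_image_of_injective F hinj
  set M : ℝ := (n:ℝ) - n / q with hM
  clear_value R ε lam M
  have hM0 : 0 ≤ M := by
    rw [hM]
    have : (n:ℝ)/q ≤ n/1 := by
      apply div_le_div_of_nonneg_left hnpos.le one_pos; linarith
    simp at this; linarith
  have hMn : M ≤ n := by
    rw [hM]
    have : 0 ≤ (n:ℝ)/q := by positivity
    linarith
  have hA : ∀ f f' : Fin n → Fin q,
      inner ℝ (Wvec q n f) (Wvec q n f') = M - (hammingDist f f' : ℝ) := by
    intro f f'
    rw [inner_Wvec q n hq, hM]; ring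
  -- pairwise negative inner products
  have hneg : ∀ v₁ ∈ s, ∀ v₂ ∈ s, v₁ ≠ v₂ → inner ℝ v₁ v₂ < (0:ℝ) := by
    intro v₁ hv₁ v₂ hv₂ hvne
    obtain ⟨h₁, hh₁, rfl⟩ := Finset.mem_image.1 hv₁
    obtain ⟨h₂, hh₂, rfl⟩ := Finset.mem_image.1 hv₂
    have hne : h₁ ≠ h₂ := fun h => hvne (by rw [h])
    have hd12 : M - M * β ≤ (hammingDist h₁ h₂ : ℝ) := by
      have h1C := (Finset.mem_filter.1 hh₁).1
      have h2C := (Finset.mem_filter.1 hh₂).1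
      have := hdist h₁ h1C h₂ h2C hne
      rw [le_div_iff₀ hnpos] at this
      have heq : (1 - 1/(q:ℝ)) * (1 - β) * n = M - M * β := by rw [hM]; ring
      rw [heq] at this
      exact this
    have hkey : ∀ h ∈ F, M * Real.sqrt β + n * ε ≤ M - (hammingDist g h : ℝ) := by
      intro h hh
      have h1 := hle h hh
      rw [div_le_iff₀ hnpos] at h1
      have heq : (R - ε) * n = M - M * Real.sqrt β - n * ε := by rw [hR, hM]; ring
      rw [heq] at h1
      linarith
    have hk1 := hkey h₁ hh₁
    have hk2 := hkey h₂ hh₂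
    have hexp : inner ℝ (Wvec q n h₁ - lam • Wvec q n g) (Wvec q n h₂ - lam • Wvec q n g)
        = (M - (hammingDist h₁ h₂ : ℝ)) - lam * (M - (hammingDist g h₁ : ℝ))
          - lam * (M - (hammingDist g h₂ : ℝ)) + lam * (lam * M) := by
      rw [inner_sub_left, inner_sub_right, inner_sub_right, real_inner_smul_left,
        real_inner_smul_left, real_inner_smul_right, real_inner_smul_right,
        hA, hA, hA, hA]
      rw [hammingDist_comm h₁ g, hammingDist_self]
      push_cast
      ring
    rw [hexp]
    have ha := mul_le_mul_of_nonneg_left hk1 hlampos.le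
    have hb := mul_le_mul_of_nonneg_left hk2 hlampos.le
    have hββ : Real.sqrt β * Real.sqrt β = β := Real.mul_self_sqrt hβ0
    have hstep : M - (hammingDist h₁ h₂ : ℝ) - lam * (M - (hammingDist g h₁ : ℝ))
        - lam * (M - (hammingDist g h₂ : ℝ)) + lam * (lam * M)
        ≤ M * β - lam * (M * Real.sqrt β + n * ε) - lam * (M * Real.sqrt β + n * ε)
          + lam * (lam * M) := by linarith
    have heq2 : M * β - lam * (M * Real.sqrt β + n * ε) - lam * (M * Real.sqrt β + n * ε)
          + lam * (lam * M)
        = M * (ε * ε) - 2 * ((n:ℝ) * (Real.sqrt β * ε)) - 2 * ((n:ℝ) * (ε * ε)) := by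
      rw [hlam]; linear_combination (-M) * hββ
    have hfin : M * (ε * ε) - 2 * ((n:ℝ) * (Real.sqrt β * ε)) - 2 * ((n:ℝ) * (ε * ε)) < 0 := by
      have t1 : M * (ε * ε) ≤ (n:ℝ) * (ε * ε) :=
        mul_le_mul_of_nonneg_right hMn (mul_nonneg hεpos.le hεpos.le)
      have t2 : 0 ≤ (n:ℝ) * (Real.sqrt β * ε) :=
        mul_nonneg hnpos.le (mul_nonneg hsb hεpos.le)
      have t3 : 0 < (n:ℝ) * (ε * ε) := mul_pos hnpos (mul_pos hεpos hεpos)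
      linarith
    linarith
  have hSmem : ∀ v ∈ s, v ∈ LinearMap.ker (Tmap q n) := by
    intro v hv
    obtain ⟨h, hh, rfl⟩ := Finset.mem_image.1 hv
    exact sub_mem (Wvec_mem_ker q n hq h)
      (Submodule.smul_mem _ _ (Wvec_mem_ker q n hq g))
  have hfinal := neg_inner_card' (LinearMap.ker (Tmap q n)) s hSmem hneg
  rw [finrank_ker_Tmap q n hq, hscard] at hfinal
  have hmul : (q - 1) * n = q * n - n := by
    rw [Nat.sub_mul, Nat.one_mul]
  rw [hmul]
  have hcomm : n * q = q * n := Nat.mul_comm n q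
  omega
end

section
/- Let G=(L,R,E) be a d-regular bipartite λ-expander, C₀ ⊆ [q₀]^d an inner code of fractional distance δ₀, and C₁ an outer code of blocklength n = |L| and fractional distance δ₁ over alphabet [|C₀|]. For any two distinct codewords f, g of the AEL code, Δ^R(f,g) ≥ δ₀ − λ/Δ^L(f,g); in particular the AEL code has distance at least δ₀ − λ/δ₁. -/
/-- AEL distance amplification.  Codewords of the AEL code are edge labelings
`f : Fin n × Fin d → Fin q₀` whose restriction to every left vertex lies in the inner
code `C₀` of fractional distance `δ₀`.  The bipartite graph is encoded by the
equivalence `π` as in Tanner codes, and `hlam` says its second singular value is at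
most `lam`.  For distinct codewords, `Δ^R(f,g) ≥ δ₀ − lam/Δ^L(f,g)`; in particular if
`Δ^L(f,g) ≥ δ₁` (the outer code distance) then `Δ^R(f,g) ≥ δ₀ − lam/δ₁`. -/
theorem ael_distance (q₀ n d : ℕ) (hq₀ : 0 < q₀) (hn : 0 < n) (hd : 0 < d)
    (δ₀ δ₁ lam : ℝ) (hlam0 : 0 ≤ lam) (hδ₁ : 0 < δ₁)
    (C₀ : Set (Fin d → Fin q₀))
    (hC₀ : ∀ a ∈ C₀, ∀ b ∈ C₀, a ≠ b → δ₀ ≤ (hammingDist a b : ℝ) / d)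
    (π : (Fin n × Fin d) ≃ (Fin n × Fin d))
    (hlam : ∀ u v : Fin n → ℝ,
      |∑ ℓ, ∑ r, (((Finset.univ.filter
            (fun i : Fin d => (π (ℓ, i)).1 = r)).card : ℝ) / d - 1 / n) * u ℓ * v r|
        ≤ lam * Real.sqrt (∑ ℓ, u ℓ ^ 2) * Real.sqrt (∑ r, v r ^ 2))
    (f g : Fin n × Fin d → Fin q₀)
    (hf : ∀ ℓ : Fin n, (fun i => f (ℓ, i)) ∈ C₀)
    (hg : ∀ ℓ : Fin n, (fun i => g (ℓ, i)) ∈ C₀)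
    (hne : f ≠ g) :
    let ΔL : ℝ := ((Finset.univ.filter
        (fun ℓ : Fin n => ∃ i, f (ℓ, i) ≠ g (ℓ, i))).card : ℝ) / n
    let ΔR : ℝ := ((Finset.univ.filter
        (fun r : Fin n => ∃ j, f (π.symm (r, j)) ≠ g (π.symm (r, j)))).card : ℝ) / n
    δ₀ - lam / ΔL ≤ ΔR ∧ (δ₁ ≤ ΔL → δ₀ - lam / δ₁ ≤ ΔR) := by
  classical
  intro ΔL ΔR
  set S : Finset (Fin n) := Finset.univ.filter
      (fun ℓ : Fin n => ∃ i, f (ℓ, i) ≠ g (ℓ, i)) with hSdef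
  set T : Finset (Fin n) := Finset.univ.filter
      (fun r : Fin n => ∃ j, f (π.symm (r, j)) ≠ g (π.symm (r, j))) with hTdef
  have hn' : (0:ℝ) < n := by exact_mod_cast hn
  have hd' : (0:ℝ) < d := by exact_mod_cast hd
  have hSne : 1 ≤ S.card := by
    rw [Finset.one_le_card]
    obtain ⟨x, hx⟩ := Function.ne_iff.mp hne
    exact ⟨x.1, by simp only [hSdef, Finset.mem_filter, Finset.mem_univ, true_and]; exact ⟨x.2, hx⟩⟩
  have hs1 : (1:ℝ) ≤ S.card := by exact_mod_cast hSne
  have hs0 : (0:ℝ) < S.card := lt_of_lt_of_le one_pos hs1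
  have hsn : (S.card : ℝ) ≤ n := by
    exact_mod_cast (Finset.card_le_univ S).trans_eq (by simp)
  have htn : (T.card : ℝ) ≤ n := by
    exact_mod_cast (Finset.card_le_univ T).trans_eq (by simp)
  have ht0 : (0:ℝ) ≤ T.card := Nat.cast_nonneg _
  -- notation
  set N : Fin n → Fin n → ℝ := fun ℓ r =>
    ((Finset.univ.filter (fun i : Fin d => (π (ℓ, i)).1 = r)).card : ℝ) with hNdef
  -- row bound: for ℓ ∈ S, δ₀ * d ≤ ∑ r ∈ T, N ℓ r
  have hrow : ∀ ℓ ∈ S, δ₀ * d ≤ ∑ r ∈ T, N ℓ r := by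
    intro ℓ hℓ
    obtain ⟨i₀, hi₀⟩ : ∃ i, f (ℓ, i) ≠ g (ℓ, i) := by
      simpa [hSdef] using hℓ
    have hab : (fun i => f (ℓ, i)) ≠ (fun i => g (ℓ, i)) := by
      intro h; exact hi₀ (congrFun h i₀)
    have h1 : δ₀ ≤ (hammingDist (fun i => f (ℓ, i)) (fun i => g (ℓ, i)) : ℝ) / d :=
      hC₀ _ (hf ℓ) _ (hg ℓ) hab
    have h2 : δ₀ * d ≤ (hammingDist (fun i => f (ℓ, i)) (fun i => g (ℓ, i)) : ℝ) :=
      (le_div_iff₀ hd').mp h1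
    have hHam : hammingDist (fun i => f (ℓ, i)) (fun i => g (ℓ, i))
        = (Finset.univ.filter (fun i : Fin d => f (ℓ, i) ≠ g (ℓ, i))).card := rfl
    -- differing edges go to right vertices in T
    have hsub : (Finset.univ.filter (fun i : Fin d => f (ℓ, i) ≠ g (ℓ, i)))
        ⊆ (Finset.univ.filter (fun i : Fin d => (π (ℓ, i)).1 ∈ T)) := by
      intro i hi
      simp only [Finset.mem_filter, Finset.mem_univ, true_and] at hi ⊢
      simp only [hTdef, Finset.mem_filter, Finset.mem_univ, true_and]
      refine ⟨(π (ℓ, i)).2, ?_⟩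
      rw [show ((π (ℓ, i)).1, (π (ℓ, i)).2) = π (ℓ, i) from rfl, Equiv.symm_apply_apply]
      exact hi
    have hfib : (Finset.univ.filter (fun i : Fin d => (π (ℓ, i)).1 ∈ T)).card
        = ∑ r ∈ T, ((Finset.univ.filter (fun i : Fin d => (π (ℓ, i)).1 ∈ T)).filter
            (fun i => (π (ℓ, i)).1 = r)).card := by
      apply Finset.card_eq_sum_card_fiberwise
      intro i hi
      simpa using hi
    have hfib2 : ∀ r ∈ T, ((Finset.univ.filter (fun i : Fin d => (π (ℓ, i)).1 ∈ T)).filter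
            (fun i => (π (ℓ, i)).1 = r)).card
        = (Finset.univ.filter (fun i : Fin d => (π (ℓ, i)).1 = r)).card := by
      intro r hr
      congr 1
      rw [Finset.filter_filter]
      apply Finset.filter_congr
      intro i _
      constructor
      · rintro ⟨_, h⟩; exact h
      · intro h; exact ⟨h ▸ hr, h⟩
    calc δ₀ * d ≤ (hammingDist (fun i => f (ℓ, i)) (fun i => g (ℓ, i)) : ℝ) := h2
      _ ≤ ((Finset.univ.filter (fun i : Fin d => (π (ℓ, i)).1 ∈ T)).card : ℝ) := by
          rw [hHam]; exact_mod_cast Finset.card_le_card hsub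
      _ = ∑ r ∈ T, N ℓ r := by
          rw [hfib, Nat.cast_sum]
          exact Finset.sum_congr rfl fun r hr => by rw [hfib2 r hr]
  -- total edge bound
  have hE : δ₀ * d * S.card ≤ ∑ ℓ ∈ S, ∑ r ∈ T, N ℓ r := by
    calc δ₀ * d * S.card = ∑ _ℓ ∈ S, δ₀ * d := by rw [Finset.sum_const, nsmul_eq_mul]; ring
      _ ≤ ∑ ℓ ∈ S, ∑ r ∈ T, N ℓ r := Finset.sum_le_sum hrow
  -- mixing lemma with indicators
  have hmix := hlam (fun ℓ => if ℓ ∈ S then 1 else 0) (fun r => if r ∈ T then 1 else 0)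
  have hu2 : (∑ ℓ, (if ℓ ∈ S then (1:ℝ) else 0) ^ 2) = S.card := by
    simp [ite_pow, Finset.sum_ite_mem]
  have hv2 : (∑ r, (if r ∈ T then (1:ℝ) else 0) ^ 2) = T.card := by
    simp [ite_pow, Finset.sum_ite_mem]
  have hsum : (∑ ℓ, ∑ r, (N ℓ r / d - 1 / n) *
        (if ℓ ∈ S then (1:ℝ) else 0) * (if r ∈ T then (1:ℝ) else 0))
      = (∑ ℓ ∈ S, ∑ r ∈ T, N ℓ r) / d - S.card * T.card / n := by
    have : ∀ ℓ, (∑ r, (N ℓ r / d - 1 / n) *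
        (if ℓ ∈ S then (1:ℝ) else 0) * (if r ∈ T then (1:ℝ) else 0))
        = if ℓ ∈ S then ∑ r ∈ T, (N ℓ r / d - 1 / n) else 0 := by
      intro ℓ
      by_cases hℓ : ℓ ∈ S <;> simp [hℓ, Finset.sum_ite_mem]
    rw [Finset.sum_congr rfl fun ℓ _ => this ℓ, Finset.sum_ite_mem, Finset.univ_inter]
    simp only [Finset.sum_sub_distrib, ← Finset.sum_div, Finset.sum_const, nsmul_eq_mul]
    ring
  have habs := hmix
  rw [hu2, hv2] at habs
  have h3 : (∑ ℓ ∈ S, ∑ r ∈ T, N ℓ r) / d - S.card * T.card / n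
      ≤ lam * Real.sqrt S.card * Real.sqrt T.card := by
    rw [← hsum]
    exact le_trans (le_abs_self _) habs
  -- bound the sqrt term
  have hsq : lam * Real.sqrt S.card * Real.sqrt T.card ≤ lam * n := by
    have h1 : Real.sqrt S.card ≤ Real.sqrt n := Real.sqrt_le_sqrt hsn
    have h2 : Real.sqrt T.card ≤ Real.sqrt n := Real.sqrt_le_sqrt htn
    calc lam * Real.sqrt S.card * Real.sqrt T.card
        ≤ lam * Real.sqrt n * Real.sqrt n := by
          apply mul_le_mul (mul_le_mul le_rfl h1 (Real.sqrt_nonneg _) hlam0) h2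
            (Real.sqrt_nonneg _) (by positivity)
      _ = lam * n := by
          rw [mul_assoc, Real.mul_self_sqrt hn'.le]
  have hkey : δ₀ * S.card ≤ S.card * T.card / n + lam * n := by
    have hEd : δ₀ * S.card ≤ (∑ ℓ ∈ S, ∑ r ∈ T, N ℓ r) / d := by
      rw [le_div_iff₀ hd']
      calc δ₀ * S.card * d = δ₀ * d * S.card := by ring
        _ ≤ _ := hE
    linarith [hEd, h3, hsq]
  have hΔL : ΔL = (S.card : ℝ) / n := rfl
  have hΔR : ΔR = (T.card : ℝ) / n := rfl
  have hgoal1 : δ₀ - lam / ΔL ≤ ΔR := by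
    rw [hΔL, hΔR, div_div_eq_mul_div]
    have h4 : (δ₀ - lam * n / S.card) * S.card ≤ ((T.card : ℝ) / n) * S.card := by
      have e2 : (δ₀ - lam * n / S.card) * S.card = δ₀ * S.card - lam * n := by
        field_simp
      have e3 : ((T.card : ℝ) / n) * S.card = S.card * T.card / n := by ring
      rw [e2, e3]; linarith [hkey]
    exact le_of_mul_le_mul_right h4 hs0
  refine ⟨hgoal1, fun hΔ => ?_⟩
  have hΔLpos : 0 < ΔL := lt_of_lt_of_le hδ₁ hΔ
  have : lam / ΔL ≤ lam / δ₁ := div_le_div_of_nonneg_left hlam0 hδ₁ hΔ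
  linarith
end

section
/- Let X be a finite set with probability measure μ, and F a finite family of functions f : X → ℝ with ‖f‖_μ ≤ 1, closed under negation. Let g : X → ℝ satisfy ‖g‖²_μ ≤ B. Then for every δ > 0 there exist p ≤ B/δ² functions f₁,…,f_p ∈ F and coefficients c₁,…,c_p ∈ ℝ with Σ|c_ℓ| ≤ B/δ such that h = Σ c_ℓ f_ℓ satisfies ⟨g − h, f⟩_μ ≤ δ for every f ∈ F. -/
/-- Abstract weak regularity lemma (Frieze–Kannan style).  `μ` is a probability measure
on the finite set `X`, `F` is a finite family of functions of `μ`-norm at most 1 closed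
under negation, and `g` has `‖g‖²_μ ≤ B`.  Then there is an approximator
`h = Σ c_ℓ f_ℓ` with at most `B/δ²` terms and `Σ|c_ℓ| ≤ B/δ` such that
`⟨g − h, f⟩_μ ≤ δ` for every `f ∈ F`. -/
theorem abstract_weak_regularity {X : Type*} [Fintype X]
    (μ : X → ℝ) (hμ0 : ∀ x, 0 ≤ μ x) (hμ1 : ∑ x, μ x = 1)
    (F : Finset (X → ℝ))
    (hFnorm : ∀ f ∈ F, ∑ x, μ x * f x ^ 2 ≤ 1)
    (hFneg : ∀ f ∈ F, -f ∈ F)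
    (B : ℝ) (g : X → ℝ) (hg : ∑ x, μ x * g x ^ 2 ≤ B)
    (δ : ℝ) (hδ : 0 < δ) :
    ∃ (p : ℕ) (f : Fin p → (X → ℝ)) (c : Fin p → ℝ),
      (p : ℝ) ≤ B / δ ^ 2 ∧ (∀ ℓ, f ℓ ∈ F) ∧ (∑ ℓ, |c ℓ|) ≤ B / δ ∧
      ∀ f' ∈ F, ∑ x, μ x * (g x - ∑ ℓ, c ℓ * f ℓ x) * f' x ≤ δ := by
  have key : ∀ m : ℕ, ∃ (p : ℕ) (f : Fin p → (X → ℝ)), (∀ ℓ, f ℓ ∈ F) ∧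
      (p : ℝ) * δ ^ 2 + ∑ x, μ x * (g x - ∑ ℓ, δ * f ℓ x) ^ 2 ≤ B ∧
      (p = m ∨ ∀ f' ∈ F, ∑ x, μ x * (g x - ∑ ℓ, δ * f ℓ x) * f' x ≤ δ) := by
    intro m
    induction m with
    | zero => exact ⟨0, Fin.elim0, fun ℓ => ℓ.elim0, by simpa using hg, Or.inl rfl⟩
    | succ m ih =>
      obtain ⟨p, f, hf, henergy, hlast⟩ := ih
      rcases hlast with hp | hdone
      · subst hp
        by_cases hstop : ∀ f' ∈ F, ∑ x, μ x * (g x - ∑ ℓ, δ * f ℓ x) * f' x ≤ δ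
        · exact ⟨p, f, hf, henergy, Or.inr hstop⟩
        · push_neg at hstop
          obtain ⟨f', hf'F, hf'⟩ := hstop
          refine ⟨p + 1, Fin.snoc f f', ?_, ?_, Or.inl rfl⟩
          · intro ℓ
            refine Fin.lastCases ?_ ?_ ℓ
            · simpa using hf'F
            · intro i; simpa using hf i
          · have hsum : ∀ x, ∑ ℓ : Fin (p+1), δ * (Fin.snoc f f' : Fin (p+1) → X → ℝ) ℓ x
                = (∑ ℓ : Fin p, δ * f ℓ x) + δ * f' x := by
              intro x
              rw [Fin.sum_univ_castSucc]
              simp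
            have expand : ∑ x, μ x * (g x - ((∑ ℓ : Fin p, δ * f ℓ x) + δ * f' x)) ^ 2
                = ∑ x, μ x * (g x - ∑ ℓ : Fin p, δ * f ℓ x) ^ 2
                  - 2 * δ * ∑ x, μ x * (g x - ∑ ℓ : Fin p, δ * f ℓ x) * f' x
                  + δ ^ 2 * ∑ x, μ x * f' x ^ 2 := by
              rw [Finset.mul_sum, Finset.mul_sum, ← Finset.sum_sub_distrib,
                ← Finset.sum_add_distrib]
              exact Finset.sum_congr rfl fun x _ => by ring
            have hn1 : ∑ x, μ x * f' x ^ 2 ≤ 1 := hFnorm f' hf'F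
            have hip : δ < ∑ x, μ x * (g x - ∑ ℓ : Fin p, δ * f ℓ x) * f' x := hf'
            push_cast
            calc ((p : ℝ) + 1) * δ ^ 2
                  + ∑ x, μ x * (g x - ∑ ℓ : Fin (p+1), δ * (Fin.snoc f f' : Fin (p+1) → X → ℝ) ℓ x) ^ 2
                = ((p : ℝ) + 1) * δ ^ 2
                  + ∑ x, μ x * (g x - ((∑ ℓ : Fin p, δ * f ℓ x) + δ * f' x)) ^ 2 := by
                  congr 1; exact Finset.sum_congr rfl fun x _ => by rw [hsum]
              _ ≤ (p : ℝ) * δ ^ 2 + ∑ x, μ x * (g x - ∑ ℓ : Fin p, δ * f ℓ x) ^ 2 := by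
                  rw [expand]; nlinarith [sq_nonneg δ]
              _ ≤ B := henergy
          -- cast fix below in case of coercion mismatch
      · exact ⟨p, f, hf, henergy, Or.inr hdone⟩
  obtain ⟨p, f, hf, henergy, hlast⟩ := key (⌊B / δ ^ 2⌋₊ + 1)
  have hE0 : 0 ≤ ∑ x, μ x * (g x - ∑ ℓ, δ * f ℓ x) ^ 2 :=
    Finset.sum_nonneg fun x _ => mul_nonneg (hμ0 x) (sq_nonneg _)
  have hδ2 : (0:ℝ) < δ ^ 2 := by positivity
  have hpB : (p : ℝ) * δ ^ 2 ≤ B := by linarith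
  have hple : (p : ℝ) ≤ B / δ ^ 2 := (le_div_iff₀ hδ2).mpr hpB
  rcases hlast with hp | hdone
  · exfalso
    have hlt : B / δ ^ 2 < (⌊B / δ ^ 2⌋₊ : ℝ) + 1 := Nat.lt_floor_add_one _
    have : (p : ℝ) = (⌊B / δ ^ 2⌋₊ : ℝ) + 1 := by rw [hp]; push_cast; ring
    linarith
  · refine ⟨p, f, fun _ => δ, hple, hf, ?_, hdone⟩
    have : ∑ _ℓ : Fin p, |δ| = (p : ℝ) * δ := by
      rw [Finset.sum_const, abs_of_pos hδ]; simp [mul_comm]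
    rw [this, le_div_iff₀ hδ]
    nlinarith
end

section
/- Let C ⊆ 𝔽₂^n be a binary code in which any two distinct codewords c, c' satisfy |E_i[(-1)^{c_i + c'_i}]| ≤ ε (i.e., C is ε-balanced). Then for any g ∈ 𝔽₂^n, the number of codewords h with Δ(g,h) ≤ 1/2 − √ε is at most 1/ε. -/
open Finset

private lemma chi_mul (a b : ZMod 2) :
    (-1 : ℝ) ^ a.val * (-1 : ℝ) ^ b.val = (-1 : ℝ) ^ ((a + b).val) := by
  rw [← pow_add, ZMod.val_add, ← neg_one_pow_eq_pow_mod_two]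

private lemma chi_sq (a : ZMod 2) :
    (-1 : ℝ) ^ a.val * (-1 : ℝ) ^ a.val = 1 := by
  rw [← pow_add, ← two_mul, pow_mul]; norm_num

private lemma chi_pair (a b : ZMod 2) :
    ((-1 : ℝ)) ^ ((a + b).val) = if a = b then (1 : ℝ) else -1 := by
  have key : ∀ a b : ZMod 2, (a + b).val = if a = b then 0 else 1 := by decide
  rw [key]; split_ifs <;> norm_num

/-- List size within radius `1/2 − √ε` for an `ε`-balanced binary code is at most `1/ε`. -/
theorem eps_balanced_list_bound (n : ℕ) (hn : 0 < n) (ε : ℝ) (hε : 0 < ε)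
    (C : Finset (Fin n → ZMod 2))
    (hbal : ∀ c ∈ C, ∀ c' ∈ C, c ≠ c' →
      |(∑ i, ((-1 : ℝ)) ^ ((c i + c' i).val)) / n| ≤ ε)
    (g : Fin n → ZMod 2) :
    ((C.filter (fun h =>
        (hammingDist g h : ℝ) / n ≤ 1 / 2 - Real.sqrt ε)).card : ℝ) ≤ 1 / ε := by
  set L := C.filter (fun h =>
      (hammingDist g h : ℝ) / n ≤ 1 / 2 - Real.sqrt ε) with hLdef
  set m : ℝ := (L.card : ℝ) with hm
  have hnR : (0 : ℝ) < n := by exact_mod_cast hn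
  rcases Nat.eq_zero_or_pos L.card with hcard | hcard
  · simp only [hm, hcard, Nat.cast_zero]
    positivity
  have hm1 : (1 : ℝ) ≤ m := by rw [hm]; exact_mod_cast hcard
  -- the embedding into ±1 vectors
  set f : (Fin n → ZMod 2) → Fin n → ℝ := fun c i => (-1 : ℝ) ^ ((c i).val) with hf
  have hprod : ∀ c c' : Fin n → ZMod 2, ∀ i : Fin n,
      f c i * f c' i = (-1 : ℝ) ^ ((c i + c' i).val) := fun c c' i => chi_mul _ _
  -- inner product versus hamming distance
  have hdist : ∀ h : Fin n → ZMod 2,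
      ∑ i, f g i * f h i = (n : ℝ) - 2 * hammingDist g h := by
    intro h
    have : ∀ i : Fin n, f g i * f h i
        = 1 - 2 * (if g i ≠ h i then (1 : ℝ) else 0) := by
      intro i
      rw [hprod, chi_pair]
      rcases eq_or_ne (g i) (h i) with hgh | hgh <;> simp [hgh] <;> norm_num
    rw [Finset.sum_congr rfl fun i _ => this i]
    rw [Finset.sum_sub_distrib, ← Finset.mul_sum, Finset.sum_boole, hammingDist]
    simp
  -- lower bound on correlation for list elements
  have hcorr : ∀ h ∈ L, 2 * Real.sqrt ε * n ≤ ∑ i, f g i * f h i := by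
    intro h hh
    rw [hLdef, Finset.mem_filter] at hh
    have hd : (hammingDist g h : ℝ) ≤ n * (1 / 2 - Real.sqrt ε) := by
      have := hh.2
      rw [div_le_iff₀ hnR] at this
      linarith
    rw [hdist h]
    nlinarith [Real.sqrt_nonneg ε]
  -- cross correlations for distinct codewords
  have hcross : ∀ h ∈ L, ∀ h' ∈ L, h ≠ h' →
      ∑ i, f h i * f h' i ≤ ε * n := by
    intro h hh h' hh' hne
    have hhC : h ∈ C := (Finset.mem_filter.mp hh).1
    have hh'C : h' ∈ C := (Finset.mem_filter.mp hh').1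
    have := hbal h hhC h' hh'C hne
    rw [abs_div, abs_of_pos hnR, div_le_iff₀ hnR] at this
    calc ∑ i, f h i * f h' i = ∑ i, (-1 : ℝ) ^ ((h i + h' i).val) :=
          Finset.sum_congr rfl fun i _ => hprod h h' i
      _ ≤ |∑ i, (-1 : ℝ) ^ ((h i + h' i).val)| := le_abs_self _
      _ ≤ ε * n := this
  have hdiag : ∀ h : Fin n → ZMod 2, ∑ i, f h i * f h i = (n : ℝ) := by
    intro h
    have : ∀ i : Fin n, f h i * f h i = 1 := fun i => chi_sq (h i)
    simp [this]
  -- Cauchy-Schwarz setup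
  set F : Fin n → ℝ := fun i => ∑ h ∈ L, f h i with hF
  have hA : 2 * Real.sqrt ε * n * m ≤ ∑ i, f g i * F i := by
    have : ∑ i, f g i * F i = ∑ h ∈ L, ∑ i, f g i * f h i := by
      simp_rw [hF, Finset.mul_sum]
      rw [Finset.sum_comm]
    rw [this]
    calc 2 * Real.sqrt ε * n * m = ∑ _h ∈ L, 2 * Real.sqrt ε * n := by
          rw [Finset.sum_const, hm, nsmul_eq_mul]; ring
      _ ≤ ∑ h ∈ L, ∑ i, f g i * f h i := Finset.sum_le_sum hcorr
  have hCS : (∑ i, f g i * F i) ^ 2 ≤ (n : ℝ) * ∑ i, F i ^ 2 := by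
    have := Finset.sum_mul_sq_le_sq_mul_sq Finset.univ (f g) F
    have hone : ∑ i, f g i ^ 2 = (n : ℝ) := by
      have : ∀ i : Fin n, f g i ^ 2 = 1 := by
        intro i
        rw [sq]
        exact chi_sq (g i)
      simp [this]
    rwa [hone] at this
  have hFsq : ∑ i, F i ^ 2 ≤ m * n + m * (m - 1) * (ε * n) := by
    have hsw : ∑ i, F i ^ 2 = ∑ h ∈ L, ∑ h' ∈ L, ∑ i, f h i * f h' i := by
      simp_rw [hF, sq, Finset.sum_mul_sum]
      rw [Finset.sum_comm]
      refine Finset.sum_congr rfl fun h _ => ?_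
      rw [Finset.sum_comm]
    rw [hsw]
    have hbound : ∀ h ∈ L, ∑ h' ∈ L, ∑ i, f h i * f h' i ≤ n + (m - 1) * (ε * n) := by
      intro h hh
      rw [← Finset.add_sum_erase _ _ hh]
      have h1 : ∑ h' ∈ L.erase h, ∑ i, f h i * f h' i ≤ (m - 1) * (ε * n) := by
        have hb : ∀ h' ∈ L.erase h, ∑ i, f h i * f h' i ≤ ε * n := by
          intro h' hh'
          exact hcross h hh h' (Finset.mem_of_mem_erase hh')
            (Ne.symm (Finset.ne_of_mem_erase hh'))
        calc ∑ h' ∈ L.erase h, ∑ i, f h i * f h' i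
            ≤ (L.erase h).card • (ε * n) := Finset.sum_le_card_nsmul _ _ _ hb
          _ = ((L.erase h).card : ℝ) * (ε * n) := nsmul_eq_mul _ _
          _ = (m - 1) * (ε * n) := by
              rw [Finset.card_erase_of_mem hh, hm]
              congr 1
              have : 1 ≤ L.card := hcard
              push_cast [Nat.cast_sub this]
              ring
      rw [hdiag h]
      linarith
    calc ∑ h ∈ L, ∑ h' ∈ L, ∑ i, f h i * f h' i
        ≤ ∑ _h ∈ L, ((n : ℝ) + (m - 1) * (ε * n)) := Finset.sum_le_sum hbound
      _ = m * n + m * (m - 1) * (ε * n) := by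
          rw [Finset.sum_const, hm, nsmul_eq_mul]; ring
  -- combine
  have hkey : (2 * Real.sqrt ε * n * m) ^ 2 ≤ (n:ℝ) * (m * n + m * (m - 1) * (ε * n)) := by
    have h0 : 0 ≤ 2 * Real.sqrt ε * n * m := by positivity
    calc (2 * Real.sqrt ε * n * m) ^ 2 ≤ (∑ i, f g i * F i) ^ 2 := by
          exact pow_le_pow_left₀ h0 hA 2
      _ ≤ (n : ℝ) * ∑ i, F i ^ 2 := hCS
      _ ≤ (n:ℝ) * (m * n + m * (m - 1) * (ε * n)) := by
          exact mul_le_mul_of_nonneg_left hFsq (le_of_lt hnR)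
  have hsq : Real.sqrt ε ^ 2 = ε := Real.sq_sqrt hε.le
  have e1 : (2 * Real.sqrt ε * n * m) ^ 2 = (n : ℝ) ^ 2 * (4 * ε * m ^ 2) := by
    calc (2 * Real.sqrt ε * n * m) ^ 2
        = Real.sqrt ε ^ 2 * (4 * (n:ℝ) ^ 2 * m ^ 2) := by ring
      _ = (n : ℝ) ^ 2 * (4 * ε * m ^ 2) := by rw [hsq]; ring
  have e2 : (n : ℝ) * (m * n + m * (m - 1) * (ε * n))
      = (n : ℝ) ^ 2 * (m + ε * m * (m - 1)) := by ring
  rw [e1, e2] at hkey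
  have hkey2 : 4 * ε * m ^ 2 ≤ m + ε * m * (m - 1) :=
    (mul_le_mul_iff_right₀ (by positivity : (0:ℝ) < (n:ℝ) ^ 2)).mp hkey
  rw [le_div_iff₀ hε]
  nlinarith [hkey2, hm1, hε]
end

section
/- Let C ⊆ [K]^n be a collection of strings such that no L of them agree simultaneously on a set of β·n coordinates. If β ≤ 1/K^{2(L−1)}, then |C| ≤ (L−1)²·(1 + K^{L−1}). -/
open Finset Fintype Function

lemma agree_card_eq {K n L : ℕ} (hL : 0 < L) (C : Finset (Fin n → Fin K)) (i : Fin n) :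
    ((piFinset fun _ : Fin L => C).filter
      (fun t => ∀ l l' : Fin L, t l i = t l' i)).card
    = ∑ j : Fin K, (C.filter fun f => f i = j).card ^ L := by
  classical
  set z : Fin L := ⟨0, hL⟩ with hz
  rw [Finset.card_eq_sum_card_fiberwise (f := fun t => t z i)
    (t := (univ : Finset (Fin K))) (fun _ _ => mem_univ _)]
  refine Finset.sum_congr rfl fun j _ => ?_
  have he : (((piFinset fun _ : Fin L => C).filter
      (fun t => ∀ l l' : Fin L, t l i = t l' i)).filter (fun t => t z i = j))
      = piFinset fun _ : Fin L => C.filter fun f => f i = j := by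
    ext t
    simp only [mem_filter, Fintype.mem_piFinset]
    constructor
    · rintro ⟨⟨h1, h2⟩, h3⟩ l
      exact ⟨h1 l, (h2 l z).trans h3⟩
    · intro h
      exact ⟨⟨fun l => (h l).1, fun l l' => ((h l).2).trans ((h l').2).symm⟩, (h z).2⟩
  rw [he, Fintype.card_piFinset_const]

lemma total_count {K n L : ℕ} (hL : 0 < L) (C : Finset (Fin n → Fin K)) :
    ∑ t ∈ (piFinset fun _ : Fin L => C),
      ((univ : Finset (Fin n)).filter fun i => ∀ l l' : Fin L, t l i = t l' i).card
    = ∑ i : Fin n, ∑ j : Fin K, (C.filter fun f => f i = j).card ^ L := by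
  classical
  have h1 : ∀ t : Fin L → Fin n → Fin K,
      ((univ : Finset (Fin n)).filter fun i => ∀ l l' : Fin L, t l i = t l' i).card
      = ∑ i : Fin n, if (∀ l l' : Fin L, t l i = t l' i) then 1 else 0 := fun t => by
    rw [Finset.card_filter]
  simp_rw [h1]
  rw [Finset.sum_comm]
  refine Finset.sum_congr rfl fun i _ => ?_
  rw [← Finset.card_filter, agree_card_eq hL C i]

lemma sum_fiber {K n : ℕ} (C : Finset (Fin n → Fin K)) (i : Fin n) :
    ∑ j : Fin K, (C.filter fun f => f i = j).card = C.card :=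
  (Finset.card_eq_sum_card_fiberwise (fun f _ => mem_univ (f i))).symm

open Finset Fintype Function

lemma noninj_card_le {K n L : ℕ} (C : Finset (Fin n → Fin K)) (f0 : Fin n → Fin K)
    (hf0 : f0 ∈ C) (a b : Fin L) (hab : a ≠ b) :
    ((piFinset fun _ : Fin L => C).filter fun t => t a = t b).card ≤ C.card ^ (L - 1) := by
  classical
  have hcard : ((piFinset fun _ : Fin L => C).filter fun t => t b = f0).card
      = C.card ^ (L - 1) := by
    have h := Fintype.card_filter_piFinset_const_eq_of_mem
      (ι := Fin L) (C) b hf0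
    simpa using h
  rw [← hcard]
  apply Finset.card_le_card_of_injOn (fun t => Function.update t b f0)
  · intro t ht
    rcases mem_filter.1 ht with ⟨htS, htab⟩
    refine mem_filter.2 ⟨Fintype.mem_piFinset.2 fun l => ?_, Function.update_self _ _ _⟩
    rcases eq_or_ne l b with rfl | h
    · simpa using hf0
    · simp only [Function.update_of_ne h]; exact Fintype.mem_piFinset.1 htS l
  · intro t ht t' ht' hup
    have h1 := (mem_filter.1 (Finset.mem_coe.1 ht)).2
    have h1' := (mem_filter.1 (Finset.mem_coe.1 ht')).2
    funext l
    rcases eq_or_ne l b with rfl | h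
    · have ha := congrFun hup a
      dsimp only at ha
      rw [Function.update_of_ne hab, Function.update_of_ne hab] at ha
      rw [← h1, ← h1', ha]
    · have := congrFun hup l
      dsimp only at this
      rwa [Function.update_of_ne h, Function.update_of_ne h] at this

lemma two_mul_card_ltpairs (L : ℕ) :
    2 * ((univ : Finset (Fin L × Fin L)).filter fun p => p.1 < p.2).card = L * (L - 1) := by
  classical
  have hQ : ((univ : Finset (Fin L × Fin L)).filter fun p => p.2 < p.1).card
      = ((univ : Finset (Fin L × Fin L)).filter fun p => p.1 < p.2).card := by
    apply Finset.card_bij (fun p _ => p.swap)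
    · intro p hp
      simp only [mem_filter, mem_univ, true_and] at *
      exact hp
    · intro p hp q hq h
      exact Prod.swap_injective h
    · intro q hq
      refine ⟨q.swap, ?_, by simp⟩
      simp only [mem_filter, mem_univ, true_and] at *
      exact hq
  have hdisj : Disjoint ((univ : Finset (Fin L × Fin L)).filter fun p => p.1 < p.2)
      ((univ : Finset (Fin L × Fin L)).filter fun p => p.2 < p.1) :=
    Finset.disjoint_left.2 fun p hp hq =>
      absurd (mem_filter.1 hq).2 (lt_asymm (mem_filter.1 hp).2)
  have hunion : ((univ : Finset (Fin L × Fin L)).filter fun p => p.1 < p.2)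
      ∪ ((univ : Finset (Fin L × Fin L)).filter fun p => p.2 < p.1)
      = (univ : Finset (Fin L)).offDiag := by
    ext p
    simp only [mem_union, mem_filter, mem_univ, true_and, Finset.mem_offDiag]
    constructor
    · rintro (h | h)
      · exact ne_of_lt h
      · exact ne_of_gt h
    · exact fun h => lt_or_gt_of_ne h
  have hcu := Finset.card_union_of_disjoint hdisj
  rw [hunion] at hcu
  have hoff : ((univ : Finset (Fin L)).offDiag).card = L * L - L := by
    rw [Finset.offDiag_card, card_univ, Fintype.card_fin]
  have hLL : L * L - L = L * (L - 1) := by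
    cases L with
    | zero => simp
    | succ l =>
      have h1 : (l+1)*(l+1) = (l+1)*l + (l+1) := by ring
      have h2 : (l+1)*(l+1-1) = (l+1)*l := by simp
      omega
  omega

set_option maxHeartbeats 1600000 in
set_option maxHeartbeats 1600000 in
/-- Plotkin-type bound: if no `L` strings of `C ⊆ [K]^n` simultaneously agree on a set
of `β·n` coordinates and `β ≤ 1/K^{2(L−1)}`, then `|C| ≤ (L−1)²·(1 + K^{L−1})`. -/
theorem plotkin_list_bound (K n L : ℕ) (hK : 0 < K) (hn : 0 < n) (β : ℝ)
    (C : Finset (Fin n → Fin K))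
    (hagree : ∀ T ⊆ C, T.card = L →
      ((Finset.univ.filter
        (fun i : Fin n => ∀ f ∈ T, ∀ g ∈ T, f i = g i)).card : ℝ) < β * n)
    (hβ : β ≤ 1 / (K : ℝ) ^ (2 * (L - 1))) :
    (C.card : ℝ) ≤ ((L : ℝ) - 1) ^ 2 * (1 + (K : ℝ) ^ (L - 1)) := by

  classical
  have hnR : (0:ℝ) < (n:ℝ) := by exact_mod_cast hn
  rcases Nat.lt_or_ge L 2 with hL2 | hL2
  · have hβ1 : β ≤ 1 := by
      have h0 : 2 * (L - 1) = 0 := by omega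
      rw [h0, pow_zero] at hβ
      simpa using hβ
    interval_cases L
    · exfalso
      have h := hagree ∅ (Finset.empty_subset C) Finset.card_empty
      have he : (Finset.univ.filter
          (fun i : Fin n => ∀ f ∈ (∅ : Finset (Fin n → Fin K)), ∀ g ∈ (∅ : Finset (Fin n → Fin K)), f i = g i)) = univ := by
        apply Finset.filter_true_of_mem
        intro i _ f hf
        exact absurd hf (Finset.notMem_empty f)
      rw [he] at h
      simp only [card_univ, Fintype.card_fin] at h
      nlinarith
    · have hC : C = ∅ := by
        by_contra hne
        obtain ⟨f, hf⟩ := Finset.nonempty_iff_ne_empty.2 hne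
        have h := hagree {f} (Finset.singleton_subset_iff.2 hf) (Finset.card_singleton f)
        have he : (Finset.univ.filter
            (fun i : Fin n => ∀ f' ∈ ({f} : Finset (Fin n → Fin K)), ∀ g ∈ ({f} : Finset (Fin n → Fin K)), f' i = g i)) = univ := by
          apply Finset.filter_true_of_mem
          intro i _ f' hf' g hg
          rw [Finset.mem_singleton] at hf' hg
          rw [hf', hg]
        rw [he] at h
        simp only [card_univ, Fintype.card_fin] at h
        nlinarith
      norm_num [hC]
  rcases Nat.lt_or_ge K 2 with hK2 | hK2
  · have hK1 : K = 1 := by omega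
    subst hK1
    have hone : C.card ≤ 1 := by
      refine Finset.card_le_one.2 fun f hf g hg => ?_
      funext x
      have h1 := (f x).isLt
      have h2 := (g x).isLt
      exact Fin.ext (by omega)
    have hLR : (2:ℝ) ≤ (L:ℝ) := by exact_mod_cast hL2
    have hcR : (C.card:ℝ) ≤ 1 := by exact_mod_cast hone
    simp only [Nat.cast_one, one_pow]
    nlinarith
  rcases Nat.lt_or_ge C.card L with hML | hML
  · have h1 : (C.card:ℝ) ≤ (L:ℝ) - 1 := by
      have h2 : ((C.card : ℕ) : ℝ) + 1 ≤ (L:ℝ) := by exact_mod_cast hML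
      linarith
    have hLR : (2:ℝ) ≤ (L:ℝ) := by exact_mod_cast hL2
    have hK1 : (1:ℝ) ≤ (K:ℝ) := by exact_mod_cast hK
    have hKp : (1:ℝ) ≤ (K:ℝ)^(L-1) := one_le_pow₀ hK1
    nlinarith
  · -- main case: 2 ≤ L, 2 ≤ K, L ≤ C.card
    have hL0 : 0 < L := by omega
    have hMpos : 0 < C.card := by omega
    obtain ⟨f0, hf0⟩ := Finset.card_pos.1 hMpos
    set S := (piFinset fun _ : Fin L => C) with hSdef
    set P := ((univ : Finset (Fin L × Fin L)).filter fun p => p.1 < p.2) with hPdef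
    set a : (Fin L → Fin n → Fin K) → ℕ :=
      fun t => ((univ : Finset (Fin n)).filter fun i => ∀ l l' : Fin L, t l i = t l' i).card
      with hadef
    set Nn : ℕ := ∑ t ∈ S, a t with hNdef
    set m : ℝ := (C.card : ℝ) with hmdef
    set xr : ℝ := (K:ℝ)^(L-1) with hxdef
    set pr : ℝ := (P.card : ℝ) with hprdef
    set lr : ℝ := (L : ℝ) with hlrdef
    have hmpos : (0:ℝ) < m := by rw [hmdef]; exact_mod_cast hMpos
    have hKR : (2:ℝ) ≤ (K:ℝ) := by exact_mod_cast hK2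
    have hlR : (2:ℝ) ≤ lr := by rw [hlrdef]; exact_mod_cast hL2
    have hxpos : (0:ℝ) < xr := by positivity
    have hx2 : (2:ℝ) ≤ xr := by
      calc (2:ℝ) = 2^1 := by norm_num
        _ ≤ (2:ℝ)^(L-1) := pow_le_pow_right₀ (by norm_num) (by omega)
        _ ≤ (K:ℝ)^(L-1) := by
            apply pow_le_pow_left₀ (by norm_num) hKR
    -- β bounds
    have hβx : β ≤ 1 / xr^2 := by
      have he : (K:ℝ)^(2*(L-1)) = xr^2 := by
        rw [hxdef, ← pow_mul, mul_comm]
      rwa [he] at hβ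
    have hβpos : 0 < β := by
      obtain ⟨T, hTC, hTcard⟩ := Finset.exists_subset_card_eq hML
      have h := hagree T hTC hTcard
      by_contra hc
      push_neg at hc
      have h2 : β * n ≤ 0 := mul_nonpos_of_nonpos_of_nonneg hc hnR.le
      have h3 : (0:ℝ) ≤ ((Finset.univ.filter
        (fun i : Fin n => ∀ f ∈ T, ∀ g ∈ T, f i = g i)).card : ℝ) := Nat.cast_nonneg _
      linarith
    -- lower bound on Nn
    have hlow : (n:ℝ) * (m^L / xr) ≤ (Nn:ℝ) := by
      have hNat : Nn = ∑ i : Fin n, ∑ j : Fin K, (C.filter fun f => f i = j).card ^ L :=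
        total_count hL0 C
      rw [hNat]
      push_cast
      have step : ∀ i : Fin n, m^L / xr ≤ ∑ j : Fin K, ((C.filter fun f => f i = j).card : ℝ) ^ L := by
        intro i
        have hsum : ∑ j : Fin K, ((C.filter fun f => f i = j).card : ℝ) = m := by
          rw [hmdef, ← Nat.cast_sum]
          exact_mod_cast congrArg (Nat.cast : ℕ → ℝ) (sum_fiber C i)
        have hpm := pow_sum_div_card_le_sum_pow (s := (univ : Finset (Fin K)))
          (f := fun j => ((C.filter fun f => f i = j).card : ℝ)) (fun j _ => Nat.cast_nonneg _) (L-1)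
        rw [hsum, card_univ, Fintype.card_fin] at hpm
        have hL1 : L - 1 + 1 = L := Nat.succ_pred_eq_of_pos hL0
        rw [hL1] at hpm
        rw [hxdef]
        exact hpm
      calc (n:ℝ) * (m^L / xr) = ∑ _i : Fin n, (m^L / xr) := by
            rw [Finset.sum_const, card_univ, Fintype.card_fin, nsmul_eq_mul]
        _ ≤ _ := Finset.sum_le_sum fun i _ => step i
    -- upper bound on Nn
    have hSa : ∀ t ∈ S, a t ≤ n := fun t _ =>
      le_trans (Finset.card_filter_le _ _) (by simp)
    have hScard : S.card = C.card ^ L := Fintype.card_piFinset_const C L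
    -- injective tuple exists
    obtain ⟨T, hTC, hTcard⟩ := Finset.exists_subset_card_eq hML
    have hinjex : ∃ t0 : Fin L → Fin n → Fin K, t0 ∈ S ∧ Function.Injective t0 := by
      let e : Fin L ≃ {x // x ∈ T} := (finCongr hTcard.symm).trans T.equivFin.symm
      refine ⟨fun l => (e l : Fin n → Fin K), ?_, ?_⟩
      · exact Fintype.mem_piFinset.2 fun l => hTC (e l).2
      · exact fun x y h => e.injective (Subtype.coe_injective h)
    obtain ⟨t0, ht0S, ht0inj⟩ := hinjex
    have hinjne : (S.filter fun t => Function.Injective t).Nonempty :=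
      ⟨t0, mem_filter.2 ⟨ht0S, ht0inj⟩⟩
    have hinjbound : ∀ t ∈ S.filter (fun t => Function.Injective t), (a t : ℝ) < β * n := by
      intro t ht
      rcases mem_filter.1 ht with ⟨htS, htinj⟩
      have himg : univ.image t ⊆ C := by
        intro f hf
        rcases Finset.mem_image.1 hf with ⟨l, -, rfl⟩
        exact Fintype.mem_piFinset.1 htS l
      have hcard : (univ.image t).card = L := by
        rw [Finset.card_image_of_injective _ htinj, card_univ, Fintype.card_fin]
      have h := hagree _ himg hcard
      have hfe : (univ.filter fun i : Fin n => ∀ f ∈ univ.image t, ∀ g ∈ univ.image t, f i = g i)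
          = univ.filter fun i : Fin n => ∀ l l' : Fin L, t l i = t l' i := by
        apply Finset.filter_congr
        intro i _
        constructor
        · intro hh l l'
          exact hh _ (Finset.mem_image_of_mem t (mem_univ l)) _ (Finset.mem_image_of_mem t (mem_univ l'))
        · intro hh f hf g hg
          rcases Finset.mem_image.1 hf with ⟨l, -, rfl⟩
          rcases Finset.mem_image.1 hg with ⟨l', -, rfl⟩
          exact hh l l'
      rw [hfe] at h
      exact h
    have hninj_card : (S.filter fun t => ¬ Function.Injective t).card ≤ P.card * C.card ^ (L-1) := by
      have hsub : (S.filter fun t => ¬ Function.Injective t)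
          ⊆ P.biUnion (fun p => S.filter fun t => t p.1 = t p.2) := by
        intro t ht
        rcases mem_filter.1 ht with ⟨htS, htni⟩
        rw [Function.not_injective_iff] at htni
        obtain ⟨aa, bb, heq, hne⟩ := htni
        rcases hne.lt_or_gt with h | h
        · exact Finset.mem_biUnion.2 ⟨(aa,bb), mem_filter.2 ⟨mem_univ _, h⟩,
            mem_filter.2 ⟨htS, heq⟩⟩
        · exact Finset.mem_biUnion.2 ⟨(bb,aa), mem_filter.2 ⟨mem_univ _, h⟩,
            mem_filter.2 ⟨htS, heq.symm⟩⟩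
      calc (S.filter fun t => ¬ Function.Injective t).card
          ≤ (P.biUnion (fun p => S.filter fun t => t p.1 = t p.2)).card :=
            Finset.card_le_card hsub
        _ ≤ ∑ p ∈ P, (S.filter fun t => t p.1 = t p.2).card := Finset.card_biUnion_le
        _ ≤ ∑ _p ∈ P, C.card ^ (L-1) := Finset.sum_le_sum fun p hp =>
            noninj_card_le C f0 hf0 p.1 p.2 (ne_of_lt (mem_filter.1 hp).2)
        _ = P.card * C.card ^ (L-1) := by rw [Finset.sum_const, smul_eq_mul]
    have hup : (Nn:ℝ) < (n:ℝ) * (β * m^L + pr * m^(L-1)) := by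
      have hcastN : (Nn:ℝ) = ∑ t ∈ S, (a t : ℝ) := by
        rw [hNdef]; push_cast; rfl
      rw [hcastN,
        ← Finset.sum_filter_add_sum_filter_not S (fun t => Function.Injective t) (fun t => (a t:ℝ))]
      have hA : ∑ t ∈ S.filter (fun t => Function.Injective t), (a t:ℝ) < m^L * (β * n) := by
        calc ∑ t ∈ S.filter (fun t => Function.Injective t), (a t:ℝ)
            < ∑ _t ∈ S.filter (fun t => Function.Injective t), (β * (n:ℝ)) :=
              Finset.sum_lt_sum_of_nonempty hinjne hinjbound
          _ = ((S.filter (fun t => Function.Injective t)).card : ℝ) * (β * n) := by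
              rw [Finset.sum_const, nsmul_eq_mul]
          _ ≤ m^L * (β * n) := by
              apply mul_le_mul_of_nonneg_right _ (by positivity)
              have hle : (S.filter (fun t => Function.Injective t)).card ≤ C.card ^ L := by
                calc _ ≤ S.card := Finset.card_filter_le _ _
                  _ = C.card ^ L := hScard
              rw [hmdef]
              exact_mod_cast hle
      have hB : ∑ t ∈ S.filter (fun t => ¬ Function.Injective t), (a t:ℝ)
          ≤ (pr * m^(L-1)) * n := by
        calc ∑ t ∈ S.filter (fun t => ¬ Function.Injective t), (a t:ℝ)
            ≤ ∑ _t ∈ S.filter (fun t => ¬ Function.Injective t), (n:ℝ) :=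
              Finset.sum_le_sum fun t ht => by
                exact_mod_cast hSa t (Finset.filter_subset _ _ ht)
          _ = ((S.filter (fun t => ¬ Function.Injective t)).card : ℝ) * n := by
              rw [Finset.sum_const, nsmul_eq_mul]
          _ ≤ (pr * m^(L-1)) * n := by
              apply mul_le_mul_of_nonneg_right _ hnR.le
              rw [hprdef, hmdef]
              exact_mod_cast hninj_card
      calc _ < m^L * (β * n) + (pr * m^(L-1)) * n := by linarith
        _ = (n:ℝ) * (β * m^L + pr * m^(L-1)) := by ring
    -- combine and cancel n
    have hmain : m^L / xr < β * m^L + pr * m^(L-1) := by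
      have h' : (n:ℝ) * (m^L / xr) < (n:ℝ) * (β * m^L + pr * m^(L-1)) :=
        lt_of_le_of_lt hlow hup
      exact (mul_lt_mul_iff_right₀ hnR).1 h'
    -- remove β, get polynomial inequality
    have hqpos : (0:ℝ) < m^(L-1) := by positivity
    have hML' : m^L = m^(L-1) * m := by
      rw [← pow_succ]
      congr 1
      omega
    have hstep : m * xr < m + pr * xr^2 := by
      rw [hML'] at hmain
      have hb : β * (m^(L-1) * m) ≤ (m^(L-1) * m) / xr^2 := by
        rw [div_eq_mul_inv, mul_comm ((m^(L-1) * m)) (xr^2)⁻¹, ← one_div]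
        exact mul_le_mul_of_nonneg_right hβx (by positivity)
      have h3 : m^(L-1) * m / xr < m^(L-1) * m / xr^2 + pr * m^(L-1) := by linarith
      have hxr0 : xr ≠ 0 := ne_of_gt hxpos
      have h4 : m^(L-1) * (m * xr) < m^(L-1) * (m + pr * xr^2) := by
        have e1 : m^(L-1) * (m * xr) = (m^(L-1) * m / xr) * xr^2 := by
          field_simp
        have e2 : m^(L-1) * (m + pr * xr^2)
            = (m^(L-1) * m / xr^2 + pr * m^(L-1)) * xr^2 := by
          field_simp
        rw [e1, e2]
        exact mul_lt_mul_of_pos_right h3 (by positivity)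
      exact lt_of_mul_lt_mul_left h4 hqpos.le
    -- arithmetic endgame
    have hPcast : 2 * pr = lr * (lr - 1) := by
      have h := two_mul_card_ltpairs L
      have h1 : (2:ℝ) * pr = ((L * (L-1) : ℕ) : ℝ) := by
        rw [hprdef, hPdef]
        exact_mod_cast h
      push_cast [Nat.cast_sub (by omega : 1 ≤ L)] at h1
      rw [hlrdef]
      linarith
    clear_value m xr pr lr
    clear hlow hup hmain hinjbound hninj_card hSa hinjne hScard hagree hβ hβx
    have claim : lr * (lr-1) * xr^2 ≤ 2*(lr-1)^2*(xr^2-1) + 2*(xr-1) := by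
      have hx4 : (0:ℝ) ≤ xr^2 - 4 := by nlinarith [hx2]
      have t1 : (0:ℝ) ≤ (lr-1)*(lr-2)*(xr^2-4) :=
        mul_nonneg (mul_nonneg (by linarith) (by linarith)) hx4
      nlinarith [t1, sq_nonneg (lr-2), hx2]
    clear hprdef hPdef hNdef hadef hSdef ht0S ht0inj hTC hTcard hf0 t0 T f0 Nn a P S
    have hPcast2 : 2*(pr*xr^2) = lr*(lr-1)*xr^2 := by
      have := congrArg (fun y : ℝ => y * xr^2) hPcast
      linarith [this]
    have h2 : m * (xr - 1) < ((lr-1)^2*(xr+1) + 1) * (xr - 1) := by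
      linarith [hstep, claim, hPcast2]
    have hfin : m < (lr-1)^2*(xr+1) + 1 :=
      lt_of_mul_lt_mul_right h2 (by linarith)
    -- integrality
    have hnat : C.card < (L-1)^2 * (1 + K^(L-1)) + 1 := by
      have : m < (((L-1)^2 * (1 + K^(L-1)) + 1 : ℕ) : ℝ) := by
        push_cast [Nat.cast_sub (by omega : 1 ≤ L)]
        rw [hmdef] at hfin ⊢
        rw [hlrdef, hxdef] at hfin
        linarith
      rw [hmdef] at this
      exact_mod_cast this
    have hnat2 : C.card ≤ (L-1)^2 * (1 + K^(L-1)) := by omega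
    have : (C.card : ℝ) ≤ (((L-1)^2 * (1 + K^(L-1)) : ℕ) : ℝ) := by exact_mod_cast hnat2
    push_cast [Nat.cast_sub (by omega : 1 ≤ L)] at this
    rw [← hmdef, ← hlrdef, ← hxdef] at this
    exact this
end

section
/- Let C be a linear code over 𝔽_q of blocklength n and fractional distance Δ, and let H ⊆ C be a 1-dimensional affine subspace (a line {f₀ + α·f₁ : α ∈ 𝔽_q} with f₁ ∈ C nonzero). Then for any g ∈ 𝔽_q^n and any integer k ≥ 1, the number of elements of H within fractional distance (k/(k+1))·Δ of g is at most k. -/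
/-- A line (1-dimensional affine subspace) inside a linear code of fractional distance
`Δ` contains at most `k` codewords within fractional distance `(k/(k+1))·Δ` of any
received word `g`. -/
theorem line_list_bound {F : Type*} [Field F] [Fintype F] [DecidableEq F]
    (n : ℕ) (hn : 0 < n) (Δ : ℝ)
    (C : Submodule F (Fin n → F))
    (hdist : ∀ f ∈ C, ∀ g ∈ C, f ≠ g → Δ ≤ (hammingDist f g : ℝ) / n)
    (f₀ f₁ : Fin n → F) (hf₀ : f₀ ∈ C) (hf₁ : f₁ ∈ C) (hf₁ne : f₁ ≠ 0)
    (g : Fin n → F) (k : ℕ) (hk : 1 ≤ k) :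
    {h : Fin n → F | (∃ α : F, h = f₀ + α • f₁) ∧
        (hammingDist g h : ℝ) / n < ((k : ℝ) / ((k : ℝ) + 1)) * Δ}.ncard ≤ k := by
  classical
  by_contra hcon
  push_neg at hcon
  set L := {h : Fin n → F | (∃ α : F, h = f₀ + α • f₁) ∧
      (hammingDist g h : ℝ) / n < ((k : ℝ) / ((k : ℝ) + 1)) * Δ} with hLdef
  have hLfin : L.Finite := Set.toFinite L
  rw [Set.ncard_eq_toFinset_card L hLfin] at hcon
  obtain ⟨T, hTsub, hTcard⟩ := Finset.exists_subset_card_eq (s := hLfin.toFinset) (n := k + 1) hcon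
  set s : Finset (Fin n) := Finset.univ.filter (fun i : Fin n => f₁ i ≠ 0) with hsdef
  have hnpos : (0 : ℝ) < n := by exact_mod_cast hn
  have hkpos : (0 : ℝ) < (k : ℝ) + 1 := by positivity
  have hΔn : Δ * n ≤ (s.card : ℝ) := by
    have h1 := hdist f₁ hf₁ 0 C.zero_mem hf₁ne
    have h2 : hammingDist f₁ (0 : Fin n → F) = s.card := by
      simp [hammingDist, hsdef]
    rw [h2] at h1
    have := (le_div_iff₀ hnpos).mp h1
    linarith
  set A : (Fin n → F) → Finset (Fin n) := fun h => s.filter (fun i => h i = g i) with hAdef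
  have key : ∀ h ∈ T, (s.card : ℝ) / ((k : ℝ) + 1) < ((A h).card : ℝ) := by
    intro h hhT
    have hhL : h ∈ L := hLfin.mem_toFinset.mp (hTsub hhT)
    obtain ⟨_, hdg⟩ := hhL
    have hdg' : (hammingDist g h : ℝ) < (k : ℝ) / ((k : ℝ) + 1) * Δ * n := by
      rw [div_lt_iff₀ hnpos] at hdg; linarith
    have hD : ((s.filter fun i => ¬ h i = g i).card : ℝ) ≤ (hammingDist g h : ℝ) := by
      have hsub : (s.filter fun i => ¬ h i = g i) ⊆
          Finset.univ.filter (fun i => g i ≠ h i) := by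
        intro i hi
        simp only [Finset.mem_filter] at hi ⊢
        exact ⟨Finset.mem_univ i, fun e => hi.2 e.symm⟩
      have hc := Finset.card_le_card hsub
      have hdeq : hammingDist g h = (Finset.univ.filter (fun i => g i ≠ h i)).card := rfl
      rw [hdeq]
      exact_mod_cast hc
    have hsplit : ((A h).card : ℝ) + ((s.filter fun i => ¬ h i = g i).card : ℝ)
        = (s.card : ℝ) := by
      exact_mod_cast Finset.card_filter_add_card_filter_not (s := s)
        (p := fun i => h i = g i)
    have hΔk : (k : ℝ) / ((k : ℝ) + 1) * Δ * n ≤ (k : ℝ) / ((k : ℝ) + 1) * s.card := by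
      have hk0 : (0 : ℝ) ≤ (k : ℝ) / ((k : ℝ) + 1) := by positivity
      calc (k : ℝ) / ((k : ℝ) + 1) * Δ * n = (k : ℝ) / ((k : ℝ) + 1) * (Δ * n) := by ring
        _ ≤ _ := mul_le_mul_of_nonneg_left hΔn hk0
    have hDlt : ((s.filter fun i => ¬ h i = g i).card : ℝ)
        < (k : ℝ) / ((k : ℝ) + 1) * s.card := lt_of_le_of_lt hD (lt_of_lt_of_le hdg' hΔk)
    have h3 := mul_lt_mul_of_pos_right hDlt hkpos
    have h4 : (k : ℝ) / ((k : ℝ) + 1) * s.card * ((k : ℝ) + 1) = (k : ℝ) * s.card := by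
      field_simp
    rw [h4] at h3
    rw [div_lt_iff₀ hkpos]
    nlinarith [h3, hsplit]
  have hdisj : ∀ h₁ ∈ T, ∀ h₂ ∈ T, h₁ ≠ h₂ → Disjoint (A h₁) (A h₂) := by
    intro h₁ h₁T h₂ h₂T hne
    rw [Finset.disjoint_left]
    intro i hi1 hi2
    obtain ⟨α₁, hα₁⟩ := (hLfin.mem_toFinset.mp (hTsub h₁T)).1
    obtain ⟨α₂, hα₂⟩ := (hLfin.mem_toFinset.mp (hTsub h₂T)).1
    simp only [hAdef, Finset.mem_filter, hsdef, Finset.mem_univ, true_and] at hi1 hi2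
    have hf : f₁ i ≠ 0 := hi1.1
    have he : h₁ i = h₂ i := by rw [hi1.2, hi2.2]
    rw [hα₁, hα₂] at he
    simp only [Pi.add_apply, Pi.smul_apply, smul_eq_mul] at he
    have hα : α₁ = α₂ := by
      exact mul_right_cancel₀ hf (add_left_cancel he)
    exact hne (by rw [hα₁, hα₂, hα])
  have hUsub : T.biUnion A ⊆ s := by
    intro i hi
    simp only [Finset.mem_biUnion] at hi
    obtain ⟨h, _, hih⟩ := hi
    exact (Finset.mem_filter.mp hih).1
  have hUle : ((T.biUnion A).card : ℝ) ≤ (s.card : ℝ) := by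
    exact_mod_cast Finset.card_le_card hUsub
  have hUeq : ((T.biUnion A).card : ℝ) = ∑ h ∈ T, ((A h).card : ℝ) := by
    rw [Finset.card_biUnion hdisj]
    push_cast
    ring
  have hTne : T.Nonempty := by
    rw [← Finset.card_pos, hTcard]; omega
  have hlt : (s.card : ℝ) < ∑ h ∈ T, ((A h).card : ℝ) := by
    have := Finset.sum_lt_sum_of_nonempty hTne key
    rw [Finset.sum_const, hTcard] at this
    rw [nsmul_eq_mul] at this
    have heq : ((k + 1 : ℕ) : ℝ) * ((s.card : ℝ) / ((k : ℝ) + 1)) = (s.card : ℝ) := by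
      push_cast
      field_simp
    rw [heq] at this
    exact this
  rw [← hUeq] at hlt
  linarith
end

section
/- Let C be a linear code over 𝔽_q of blocklength n and fractional distance Δ, and let H ⊆ C be an affine subspace of dimension d ≥ 1. Then for any g ∈ 𝔽_q^n and integer k ≥ 1, the number of elements of H within fractional distance (k/(k+1))·Δ of g is at most k·(k+1)^{d−1}. -/
open Finset

private lemma aux_list_bound {F : Type*} [Field F] [Fintype F] [DecidableEq F]
    (n : ℕ) (hn : 0 < n) (Δ : ℝ) (hΔ : 0 < Δ)
    (C : Submodule F (Fin n → F))
    (hdist : ∀ f ∈ C, ∀ g ∈ C, f ≠ g → Δ ≤ (hammingDist f g : ℝ) / n)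
    (g : Fin n → F) (k : ℕ) (hk : 1 ≤ k) :
    ∀ d : ℕ, 1 ≤ d → ∀ V : Submodule F (Fin n → F), V ≤ C → Module.finrank F V = d →
      ∀ f₀, f₀ ∈ C →
      {h : Fin n → F | (∃ v ∈ V, h = f₀ + v) ∧
        (hammingDist g h : ℝ) / n < ((k : ℝ) / ((k : ℝ) + 1)) * Δ}.ncard
        ≤ k * (k + 1) ^ (d - 1) := by
  intro d
  induction d using Nat.strong_induction_on with
  | _ d IH =>
  intro hd V hVC hVd f₀ hf₀
  classical
  set Lset : Set (Fin n → F) := {h : Fin n → F | (∃ v ∈ V, h = f₀ + v) ∧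
        (hammingDist g h : ℝ) / n < ((k : ℝ) / ((k : ℝ) + 1)) * Δ} with hLset
  set L : Finset (Fin n → F) := Lset.toFinset with hL
  have hncard : Lset.ncard = L.card := Set.ncard_eq_toFinset_card' _
  rw [hncard]
  have hmemL : ∀ h, h ∈ L ↔ (∃ v ∈ V, h = f₀ + v) ∧
      (hammingDist g h : ℝ) / n < ((k : ℝ) / ((k : ℝ) + 1)) * Δ := by
    intro h; rw [hL, Set.mem_toFinset]; rfl
  set S : Finset (Fin n) := Finset.univ.filter (fun i => ∃ v ∈ V, v i ≠ 0) with hS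
  have hkpos : (0 : ℝ) < (k : ℝ) + 1 := by positivity
  -- |S| ≥ Δ n
  have hScard : Δ * n ≤ (S.card : ℝ) := by
    have hVbot : V ≠ ⊥ := by
      intro h
      rw [h, finrank_bot] at hVd
      omega
    obtain ⟨v₁, hv₁V, hv₁⟩ := Submodule.exists_mem_ne_zero_of_ne_bot hVbot
    have hdv : Δ ≤ (hammingDist v₁ 0 : ℝ) / n :=
      hdist v₁ (hVC hv₁V) 0 C.zero_mem hv₁
    have hsub : (Finset.univ.filter (fun i => v₁ i ≠ (0 : Fin n → F) i)) ⊆ S := by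
      intro i hi
      simp only [Finset.mem_filter, Finset.mem_univ, true_and, Pi.zero_apply] at hi
      simp only [hS, Finset.mem_filter, Finset.mem_univ, true_and]
      exact ⟨v₁, hv₁V, hi⟩
    have hd2 : (hammingDist v₁ 0 : ℝ) ≤ (S.card : ℝ) := by
      have := Finset.card_le_card hsub
      have hdef : hammingDist v₁ (0 : Fin n → F)
          = (Finset.univ.filter (fun i => v₁ i ≠ (0 : Fin n → F) i)).card := rfl
      rw [hdef]
      exact_mod_cast this
    calc Δ * n ≤ ((hammingDist v₁ 0 : ℝ) / n) * n := by
          apply mul_le_mul_of_nonneg_right hdv (by positivity)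
      _ = (hammingDist v₁ 0 : ℝ) := by field_simp
      _ ≤ (S.card : ℝ) := hd2
  have hSpos : (0 : ℝ) < (S.card : ℝ) := lt_of_lt_of_le (by positivity) hScard
  rcases L.eq_empty_or_nonempty with hLe | hLne
  · rw [hLe]; simp
  -- each h in L agrees with g on > |S|/(k+1) coordinates of S
  have hagree : ∀ h ∈ L, (S.card : ℝ) / ((k : ℝ) + 1)
      < ((S.filter (fun i => h i = g i)).card : ℝ) := by
    intro h hh
    obtain ⟨-, hcond⟩ := (hmemL h).1 hh
    have hsplit : (S.filter (fun i => h i = g i)).card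
        + (S.filter (fun i => ¬ h i = g i)).card = S.card :=
      Finset.card_filter_add_card_filter_not _
    have hBle : ((S.filter (fun i => ¬ h i = g i)).card : ℝ) ≤ (hammingDist g h : ℝ) := by
      have hsub : S.filter (fun i => ¬ h i = g i)
          ⊆ Finset.univ.filter (fun i => g i ≠ h i) := by
        intro i hi
        simp only [Finset.mem_filter, Finset.mem_univ, true_and] at hi ⊢
        exact fun he => hi.2 he.symm
      have := Finset.card_le_card hsub
      have hdef : hammingDist g h = (Finset.univ.filter (fun i => g i ≠ h i)).card := rfl
      rw [hdef]
      exact_mod_cast this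
    have hdlt : (hammingDist g h : ℝ) < ((k : ℝ) / ((k : ℝ) + 1)) * (S.card : ℝ) := by
      have h1 : (hammingDist g h : ℝ) < ((k : ℝ) / ((k : ℝ) + 1)) * Δ * n := by
        have := mul_lt_mul_of_pos_right hcond (show (0:ℝ) < n by exact_mod_cast hn)
        calc (hammingDist g h : ℝ) = (hammingDist g h : ℝ) / n * n := by
              field_simp
          _ < ((k : ℝ) / ((k : ℝ) + 1)) * Δ * n := this
      have h2 : ((k : ℝ) / ((k : ℝ) + 1)) * Δ * n ≤ ((k : ℝ) / ((k : ℝ) + 1)) * (S.card : ℝ) := by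
        rw [mul_assoc]
        apply mul_le_mul_of_nonneg_left hScard (by positivity)
      linarith
    have hA : ((S.filter (fun i => h i = g i)).card : ℝ)
        = (S.card : ℝ) - ((S.filter (fun i => ¬ h i = g i)).card : ℝ) := by
      have := hsplit
      push_cast [← this]
      ring
    rw [hA]
    have harith : (S.card : ℝ) - ((k : ℝ) / ((k : ℝ) + 1)) * (S.card : ℝ)
        = (S.card : ℝ) / ((k : ℝ) + 1) := by
      field_simp
      ring
    linarith
  -- column bound
  obtain ⟨M, hM⟩ : ∃ M : ℕ, M = if d = 1 then 1 else k * (k + 1) ^ (d - 2) := ⟨_, rfl⟩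
  have hcol : ∀ i ∈ S, (L.filter (fun h => h i = g i)).card ≤ M := by
    intro i hiS
    rcases (L.filter (fun h => h i = g i)).eq_empty_or_nonempty with hTe | ⟨h₀, hh₀⟩
    · rw [hTe]; simp
    simp only [Finset.mem_filter] at hh₀
    obtain ⟨hh₀L, hh₀i⟩ := hh₀
    obtain ⟨⟨v₀, hv₀V, hv₀eq⟩, hh₀cond⟩ := (hmemL h₀).1 hh₀L
    -- the kernel subspace
    set ψ : V →ₗ[F] F := (LinearMap.proj i).comp V.subtype with hψ
    set W : Submodule F (Fin n → F) := (LinearMap.ker ψ).map V.subtype with hW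
    have hmemW : ∀ w, w ∈ W ↔ w ∈ V ∧ w i = 0 := by
      intro w
      constructor
      · rintro ⟨⟨x, hx⟩, hker, rfl⟩
        exact ⟨hx, hker⟩
      · rintro ⟨hwV, hwi⟩
        exact ⟨⟨w, hwV⟩, hwi, rfl⟩
    have hWC : W ≤ C := fun w hw => hVC ((hmemW w).1 hw).1
    have hWrank : Module.finrank F W = d - 1 := by
      have h1 : Module.finrank F W = Module.finrank F (LinearMap.ker ψ) :=
        Submodule.finrank_map_subtype_eq V (LinearMap.ker ψ)
      have h2 : Module.finrank F (LinearMap.range ψ)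
          + Module.finrank F (LinearMap.ker ψ) = d := by
        rw [← hVd]; exact LinearMap.finrank_range_add_finrank_ker ψ
      have hrange : Module.finrank F (LinearMap.range ψ) = 1 := by
        simp only [hS, Finset.mem_filter, Finset.mem_univ, true_and] at hiS
        obtain ⟨v₁, hv₁V, hv₁i⟩ := hiS
        have hne : LinearMap.range ψ ≠ ⊥ := by
          intro hbot
          have : ψ ⟨v₁, hv₁V⟩ ∈ LinearMap.range ψ := LinearMap.mem_range_self _ _
          rw [hbot, Submodule.mem_bot] at this
          exact hv₁i this
        have hpos : 0 < Module.finrank F (LinearMap.range ψ) := by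
          have hnt : Nontrivial (LinearMap.range ψ) := Submodule.nontrivial_iff_ne_bot.2 hne
          exact Module.finrank_pos_iff.2 hnt
        have hle : Module.finrank F (LinearMap.range ψ) ≤ Module.finrank F F :=
          Submodule.finrank_le _
        rw [Module.finrank_self] at hle
        omega
      omega
    -- the filtered set is contained in the shifted list of W
    set Lset' : Set (Fin n → F) := {h : Fin n → F | (∃ w ∈ W, h = h₀ + w) ∧
        (hammingDist g h : ℝ) / n < ((k : ℝ) / ((k : ℝ) + 1)) * Δ} with hLset'
    have hsub : ((L.filter (fun h => h i = g i)) : Set (Fin n → F)) ⊆ Lset' := by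
      intro h hh
      simp only [Finset.coe_filter, Set.mem_setOf_eq] at hh
      obtain ⟨hhL, hhi⟩ := hh
      obtain ⟨⟨v, hvV, hveq⟩, hcond⟩ := (hmemL h).1 hhL
      refine ⟨⟨v - v₀, ?_, ?_⟩, hcond⟩
      · rw [hmemW]
        refine ⟨sub_mem hvV hv₀V, ?_⟩
        have e1 : v i = h i - f₀ i := by rw [hveq]; simp
        have e2 : v₀ i = h₀ i - f₀ i := by rw [hv₀eq]; simp
        simp only [Pi.sub_apply, e1, e2, hhi, hh₀i]
        ring
      · rw [hveq, hv₀eq]; abel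
    have hcard : ((L.filter (fun h => h i = g i)).card : ℕ) ≤ Lset'.ncard := by
      rw [← Set.ncard_coe_finset]
      exact Set.ncard_le_ncard hsub (Set.toFinite _)
    by_cases hd1 : d = 1
    · -- W = ⊥, so Lset' ⊆ {h₀}
      have hWbot : W = ⊥ := by
        rw [← Submodule.finrank_eq_zero (R := F) (M := Fin n → F)]
        rw [hWrank, hd1]
      have hsub1 : Lset' ⊆ {h₀} := by
        rintro h ⟨⟨w, hwW, rfl⟩, -⟩
        rw [hWbot, Submodule.mem_bot] at hwW
        simp [hwW]
      have := Set.ncard_le_ncard hsub1 (Set.finite_singleton _)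
      rw [Set.ncard_singleton] at this
      rw [hM, if_pos hd1]
      exact le_trans hcard this
    · have hd2 : 2 ≤ d := by clear * - hd hd1; omega
      have hIH := IH (d - 1) (by clear * - hd2; omega) (by clear * - hd2; omega) W hWC hWrank h₀
        (by rw [hv₀eq]; exact C.add_mem hf₀ (hVC hv₀V))
      rw [hM, if_neg hd1]
      have he : d - 1 - 1 = d - 2 := by clear * - hd2; omega
      rw [he] at hIH
      exact le_trans hcard hIH
  -- double counting
  have hswap : ∑ h ∈ L, (S.filter (fun i => h i = g i)).card
      = ∑ i ∈ S, (L.filter (fun h => h i = g i)).card := by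
    simp_rw [Finset.card_filter]
    rw [Finset.sum_comm]
  have hlower : (L.card : ℝ) * ((S.card : ℝ) / ((k : ℝ) + 1))
      < ∑ h ∈ L, ((S.filter (fun i => h i = g i)).card : ℝ) := by
    have := Finset.sum_lt_sum_of_nonempty hLne hagree
    rwa [Finset.sum_const, nsmul_eq_mul] at this
  have hupper : ∑ h ∈ L, ((S.filter (fun i => h i = g i)).card : ℝ)
      ≤ (S.card : ℝ) * (M : ℝ) := by
    have h1 : ∑ h ∈ L, (S.filter (fun i => h i = g i)).card ≤ S.card * M := by
      rw [hswap]
      calc ∑ i ∈ S, (L.filter (fun h => h i = g i)).card ≤ ∑ i ∈ S, M :=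
            Finset.sum_le_sum hcol
        _ = S.card * M := by rw [Finset.sum_const, smul_eq_mul]
    push_cast
    exact_mod_cast h1
  have hfinal : (L.card : ℝ) < ((k : ℝ) + 1) * (M : ℝ) := by
    have h1 : (L.card : ℝ) * ((S.card : ℝ) / ((k : ℝ) + 1)) < (S.card : ℝ) * (M : ℝ) :=
      lt_of_lt_of_le hlower hupper
    have h2 : (L.card : ℝ) * (S.card : ℝ) < ((k : ℝ) + 1) * (M : ℝ) * (S.card : ℝ) := by
      have := mul_lt_mul_of_pos_right h1 hkpos
      calc (L.card : ℝ) * (S.card : ℝ)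
          = (L.card : ℝ) * ((S.card : ℝ) / ((k : ℝ) + 1)) * ((k : ℝ) + 1) := by
            field_simp
        _ < (S.card : ℝ) * (M : ℝ) * ((k : ℝ) + 1) := this
        _ = ((k : ℝ) + 1) * (M : ℝ) * (S.card : ℝ) := by ring
    exact lt_of_mul_lt_mul_right h2 (le_of_lt hSpos)
  have hnat : L.card < (k + 1) * M := by exact_mod_cast hfinal
  have hMbound : (k + 1) * M ≤ k * (k + 1) ^ (d - 1) + 1 := by
    by_cases hd1 : d = 1
    · rw [hM, if_pos hd1, hd1]
      simp
    · rw [hM, if_neg hd1]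
      have he : d - 1 = (d - 2) + 1 := by clear * - hd hd1; omega
      rw [he, pow_succ]
      clear * -
      ring_nf
      omega
  clear * - hnat hMbound
  omega

/-- A `d`-dimensional affine subspace `f₀ + V` inside a linear code of fractional
distance `Δ` contains at most `k·(k+1)^{d−1}` codewords within fractional distance
`(k/(k+1))·Δ` of any received word `g`. -/
theorem affine_subspace_list_bound {F : Type*} [Field F] [Fintype F] [DecidableEq F]
    (n d : ℕ) (hn : 0 < n) (hd : 1 ≤ d) (Δ : ℝ)
    (C : Submodule F (Fin n → F))
    (hdist : ∀ f ∈ C, ∀ g ∈ C, f ≠ g → Δ ≤ (hammingDist f g : ℝ) / n)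
    (f₀ : Fin n → F) (hf₀ : f₀ ∈ C)
    (V : Submodule F (Fin n → F)) (hVC : V ≤ C) (hVd : Module.finrank F V = d)
    (g : Fin n → F) (k : ℕ) (hk : 1 ≤ k) :
    {h : Fin n → F | (∃ v ∈ V, h = f₀ + v) ∧
        (hammingDist g h : ℝ) / n < ((k : ℝ) / ((k : ℝ) + 1)) * Δ}.ncard
      ≤ k * (k + 1) ^ (d - 1) := by
  by_cases hΔ : 0 < Δ
  · exact aux_list_bound n hn Δ hΔ C hdist g k hk d hd V hVC hVd f₀ hf₀
  · push_neg at hΔ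
    have : {h : Fin n → F | (∃ v ∈ V, h = f₀ + v) ∧
        (hammingDist g h : ℝ) / n < ((k : ℝ) / ((k : ℝ) + 1)) * Δ} = ∅ := by
      ext h
      simp only [Set.mem_setOf_eq, Set.mem_empty_iff_false, iff_false, not_and]
      intro _
      have h1 : (0 : ℝ) ≤ (hammingDist g h : ℝ) / n := by positivity
      have h2 : ((k : ℝ) / ((k : ℝ) + 1)) * Δ ≤ 0 := by
        apply mul_nonpos_of_nonneg_of_nonpos (by positivity) hΔ
      linarith
    rw [this]
    simp
end

section
/- Let γ be a generator of 𝔽_q^* and let p₁,…,p_d ∈ 𝔽_q[X] be polynomials of degree less than m, with m ≤ q − 1. Then p₁,…,p_d are linearly independent over 𝔽_q if and only if the d×d folded Wronskian matrix W(X), with entries W(X)_{i,j} = p_j(γ^{i−1}X) for 1 ≤ i,j ≤ d, has determinant that is a nonzero polynomial in 𝔽_q[X]. -/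
open Polynomial

section Aux

variable {F : Type*} [Field F]

private lemma comp_CmulX_comp (f : F[X]) (a b : F) :
    (f.comp (C a * X)).comp (C b * X) = f.comp (C (a * b) * X) := by
  rw [Polynomial.comp_assoc]
  congr 1
  rw [mul_comp, C_comp, X_comp, ← mul_assoc, ← C_mul]

private lemma comp_CmulX_injective {a : F} (ha : a ≠ 0) :
    Function.Injective (fun f : F[X] => f.comp (C a * X)) := by
  intro f g h
  have hf : (f.comp (C a * X)).comp (C a⁻¹ * X) = f := by
    rw [comp_CmulX_comp, mul_inv_cancel₀ ha, C_1, one_mul, comp_X]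
  have hg : (g.comp (C a * X)).comp (C a⁻¹ * X) = g := by
    rw [comp_CmulX_comp, mul_inv_cancel₀ ha, C_1, one_mul, comp_X]
  rw [← hf, ← hg]
  simp only at h
  rw [h]

private lemma coeff_comp_CmulX (f : F[X]) (a : F) (k : ℕ) :
    (f.comp (C a * X)).coeff k = a ^ k * f.coeff k := by
  induction f using Polynomial.induction_on' with
  | add p q hp hq => simp [add_comp, hp, hq, mul_add]
  | monomial n b =>
      rw [monomial_comp, mul_pow, ← C_pow, ← mul_assoc, ← C_mul]
      rw [coeff_C_mul, coeff_X_pow, coeff_monomial]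
      by_cases h : n = k
      · subst h; simp [mul_comm]
      · simp [h, Ne.symm h, mul_comm]

private lemma natDegree_comp_CmulX (f : F[X]) {a : F} (ha : a ≠ 0) :
    (f.comp (C a * X)).natDegree = f.natDegree := by
  rw [natDegree_comp, natDegree_C_mul_X a ha, mul_one]

end Aux

private lemma folded_wronskian_key {F : Type*} [Field F] [Fintype F] [DecidableEq F]
    (γ : Fˣ) (hγ : ∀ x : Fˣ, x ∈ Subgroup.zpowers γ) :
    ∀ (d : ℕ) (p : Fin d → Polynomial F),
      (∀ j, (p j).degree < ((Fintype.card F - 1 : ℕ) : WithBot ℕ)) →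
      (Matrix.of (fun i j : Fin d =>
        (p j).comp (C ((γ : F) ^ (i : ℕ)) * X))).det = 0 →
      ¬ LinearIndependent F p := by
  have hγF : (γ : F) ≠ 0 := γ.ne_zero
  have hord : orderOf (γ : F) = Fintype.card F - 1 := by
    rw [orderOf_units, orderOf_eq_card_of_forall_mem_zpowers hγ, Nat.card_eq_fintype_card,
      Fintype.card_units]
  have hNpos : 0 < Fintype.card F - 1 := by
    have := Fintype.one_lt_card (α := F)
    omega
  intro d
  induction d with
  | zero =>
      intro p _ hdet
      rw [Matrix.det_isEmpty] at hdet
      exact absurd hdet one_ne_zero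
  | succ d ih =>
      intro p hdeg hdet
      set N := Fintype.card F - 1 with hN
      -- kernel vector with polynomial entries
      obtain ⟨v, hv0, hvker⟩ := Matrix.exists_mulVec_eq_zero_iff.mpr hdet
      have hrow : ∀ i : Fin (d + 1),
          ∑ j, (p j).comp (C ((γ : F) ^ (i : ℕ)) * X) * v j = 0 := by
        intro i
        have := congrFun hvker i
        simpa [Matrix.mulVec, dotProduct] using this
      -- normalize gcd to 1
      obtain ⟨c, hvc, hgcd⟩ := Finset.extract_gcd v Finset.univ_nonempty
      have hG0 : Finset.univ.gcd v ≠ 0 := by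
        intro h
        apply hv0
        funext j
        exact (Finset.gcd_eq_zero_iff.mp h j (Finset.mem_univ j)).trans rfl
      have hcrow : ∀ i : Fin (d + 1),
          ∑ j, (p j).comp (C ((γ : F) ^ (i : ℕ)) * X) * c j = 0 := by
        intro i
        have h1 := hrow i
        have h2 : ∑ j, (p j).comp (C ((γ : F) ^ (i : ℕ)) * X) * v j
            = Finset.univ.gcd v * ∑ j, (p j).comp (C ((γ : F) ^ (i : ℕ)) * X) * c j := by
          rw [Finset.mul_sum]
          refine Finset.sum_congr rfl fun j _ => ?_
          rw [hvc j (Finset.mem_univ j)]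
          ring
        rw [h2] at h1
        exact (mul_eq_zero.mp h1).resolve_left hG0
      obtain ⟨j₀, hj₀⟩ : ∃ j, c j ≠ 0 := by
        by_contra h
        push_neg at h
        apply hv0
        funext j
        show v j = 0
        rw [hvc j (Finset.mem_univ j), h j, mul_zero]
      -- the substitution ring hom
      set σ : F[X] →+* F[X] := Polynomial.eval₂RingHom Polynomial.C (C (γ : F) * X) with hσdef
      have hσ : ∀ f : F[X], σ f = f.comp (C (γ : F) * X) := fun f => rfl
      have hσinj : Function.Injective σ := by
        intro f g h
        exact comp_CmulX_injective hγF (by simpa [hσ] using h)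
      -- shifted relations
      have hshift : ∀ i : Fin (d + 1),
          ∑ j, (p j).comp (C ((γ : F) ^ ((i : ℕ) + 1)) * X) * σ (c j) = 0 := by
        intro i
        have h1 : σ (∑ j, (p j).comp (C ((γ : F) ^ (i : ℕ)) * X) * c j) = 0 := by
          rw [hcrow i, map_zero]
        rw [map_sum] at h1
        rw [← h1]
        refine Finset.sum_congr rfl fun j _ => ?_
        rw [map_mul]
        congr 1
        rw [hσ, comp_CmulX_comp, pow_succ]
      -- the auxiliary vector w
      set w : Fin (d + 1) → F[X] := fun j => c j₀ * σ (c j) - σ (c j₀) * c j with hwdef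
      have hwj₀ : w j₀ = 0 := by simp [hwdef, mul_comm]
      have hwrow : ∀ i : Fin d,
          ∑ j, (p j).comp (C ((γ : F) ^ ((i : ℕ) + 1)) * X) * w j = 0 := by
        intro i
        have e1 := hshift (Fin.castSucc i)
        have e2 := hcrow (Fin.succ i)
        simp only [Fin.coe_castSucc, Fin.val_succ] at e1 e2
        have : ∑ j, (p j).comp (C ((γ : F) ^ ((i : ℕ) + 1)) * X) * w j
            = c j₀ * (∑ j, (p j).comp (C ((γ : F) ^ ((i : ℕ) + 1)) * X) * σ (c j))
              - σ (c j₀) * (∑ j, (p j).comp (C ((γ : F) ^ ((i : ℕ) + 1)) * X) * c j) := by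
          rw [Finset.mul_sum, Finset.mul_sum, ← Finset.sum_sub_distrib]
          refine Finset.sum_congr rfl fun j _ => ?_
          simp only [hwdef]
          ring
        rw [this, e1, e2, mul_zero, mul_zero, sub_zero]
      by_cases hw : ∀ j, w j = 0
      · -- w = 0 : coefficients are essentially constants times powers
        have hprop : ∀ j, c j₀ * σ (c j) = σ (c j₀) * c j := by
          intro j
          have h := hw j
          rw [hwdef] at h
          exact sub_eq_zero.mp h
        -- c j₀ divides σ (c j₀)
        have hdvd : c j₀ ∣ σ (c j₀) := by
          have h1 : ∀ j, c j₀ ∣ σ (c j₀) * c j := fun j => ⟨σ (c j), (hprop j).symm⟩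
          have h2 : c j₀ ∣ Finset.univ.gcd (fun j => σ (c j₀) * c j) :=
            Finset.dvd_gcd fun j _ => h1 j
          rw [Finset.gcd_mul_left, hgcd, mul_one] at h2
          exact dvd_normalize_iff.mp h2
        obtain ⟨t, ht⟩ := hdvd
        have hσcj₀ : σ (c j₀) ≠ 0 := fun h => hj₀ (hσinj (by rw [h, map_zero]))
        have htne : t ≠ 0 := by
          rintro rfl
          rw [mul_zero] at ht
          exact hσcj₀ ht
        have hdegt : t.natDegree = 0 := by
          have h1 : (σ (c j₀)).natDegree = (c j₀).natDegree := by
            rw [hσ]; exact natDegree_comp_CmulX _ hγF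
          rw [ht, natDegree_mul hj₀ htne] at h1
          omega
        obtain ⟨u, hu⟩ := natDegree_eq_zero.mp hdegt
        have hune : u ≠ 0 := by rintro rfl; rw [C_0] at hu; exact htne hu.symm
        have hσc : ∀ j, σ (c j) = C u * c j := by
          intro j
          apply mul_left_cancel₀ hj₀
          rw [hprop j, ht, ← hu]
          ring
        -- u is a power of γ
        obtain ⟨z, hz⟩ := Subgroup.mem_zpowers_iff.mp (hγ (Units.mk0 u hune))
        set k₀ : ℕ := (z % ((orderOf γ : ℕ) : ℤ)).toNat with hk₀def
        have hordγ : orderOf γ = N := by rw [← hord, orderOf_units]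
        have hk₀ : (γ : F) ^ k₀ = u := by
          have h1 : γ ^ (k₀ : ℤ) = γ ^ z := by
            rw [hk₀def, Int.toNat_of_nonneg (Int.emod_nonneg z (by
              simp only [ne_eq, Nat.cast_eq_zero]
              omega))]
            exact zpow_mod_orderOf γ z
          rw [zpow_natCast] at h1
          have h2 : ((γ ^ k₀ : Fˣ) : F) = ((Units.mk0 u hune : Fˣ) : F) := by
            rw [h1.trans hz]
          simpa using h2
        -- support of each c j lies in a single residue class mod N
        have hsupp : ∀ j k, (c j).coeff k ≠ 0 → k ≡ k₀ [MOD N] := by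
          intro j k hk
          have h1 : (γ : F) ^ k * (c j).coeff k = u * (c j).coeff k := by
            have := congrArg (fun f => f.coeff k) (hσc j)
            simp [hσ, coeff_comp_CmulX, coeff_C_mul] at this
            linear_combination this
          have h2 : (γ : F) ^ k = (γ : F) ^ k₀ := by
            rw [hk₀]
            exact mul_right_cancel₀ hk h1
          have h2' : γ ^ k = γ ^ k₀ := by
            apply Units.ext
            push_cast
            exact h2
          have h3 := pow_eq_pow_iff_modEq.mp h2'
          rwa [hordγ] at h3
        -- extract an F-linear relation from the lowest block
        have hrow0 : ∑ j, p j * c j = 0 := by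
          have h := hcrow 0
          simpa using h
        set A : Finset ℕ := Finset.univ.biUnion (fun j => (c j).support) with hAdef
        have hAne : A.Nonempty := by
          obtain ⟨k, hk⟩ := nonempty_support_iff.mpr hj₀
          exact ⟨k, Finset.mem_biUnion.mpr ⟨j₀, Finset.mem_univ _, hk⟩⟩
        set e₀ : ℕ := A.min' hAne with he₀def
        have he₀min : ∀ x ∈ A, e₀ ≤ x := fun x hx => A.min'_le x hx
        have he₀mod : e₀ ≡ k₀ [MOD N] := by
          obtain ⟨j, _, hj⟩ := Finset.mem_biUnion.mp (A.min'_mem hAne)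
          exact hsupp j e₀ (mem_support_iff.mp hj)
        set a : Fin (d + 1) → F := fun j => (c j).coeff e₀ with hadef
        have hane : ∃ j, a j ≠ 0 := by
          obtain ⟨j, _, hj⟩ := Finset.mem_biUnion.mp (A.min'_mem hAne)
          exact ⟨j, mem_support_iff.mp hj⟩
        have hblock : ∀ r : ℕ, ∑ j, a j * (p j).coeff r = 0 := by
          intro r
          by_cases hr : r < N
          · have h0 : (∑ j, p j * c j).coeff (e₀ + r) = 0 := by rw [hrow0, coeff_zero]
            rw [finset_sum_coeff] at h0
            have hterm : ∀ j : Fin (d + 1),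
                (p j * c j).coeff (e₀ + r) = a j * (p j).coeff r := by
              intro j
              rw [coeff_mul]
              have hmem : (r, e₀) ∈ Finset.HasAntidiagonal.antidiagonal (e₀ + r) := by
                rw [Finset.HasAntidiagonal.mem_antidiagonal]; omega
              rw [Finset.sum_eq_single_of_mem (r, e₀) hmem]
              · rw [hadef]; ring
              · rintro ⟨x₁, x₂⟩ hxmem hxne
                rw [Finset.HasAntidiagonal.mem_antidiagonal] at hxmem
                by_cases h2 : (c j).coeff x₂ = 0
                · rw [h2, mul_zero]
                · exfalso
                  have hx₂A : x₂ ∈ A :=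
                    Finset.mem_biUnion.mpr ⟨j, Finset.mem_univ _,
                      mem_support_iff.mpr h2⟩
                  have hle : e₀ ≤ x₂ := he₀min _ hx₂A
                  have hmod : e₀ ≡ x₂ [MOD N] :=
                    he₀mod.trans (hsupp j x₂ h2).symm
                  have hdvd2 : N ∣ x₂ - e₀ := (Nat.modEq_iff_dvd' hle).mp hmod
                  have hlt : x₂ - e₀ < N := by omega
                  have : x₂ - e₀ = 0 := Nat.eq_zero_of_dvd_of_lt hdvd2 hlt
                  have hx₂ : x₂ = e₀ := by omega
                  have hx₁ : x₁ = r := by omega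
                  exact hxne (by rw [hx₁, hx₂])
            rw [Finset.sum_congr rfl (fun j _ => hterm j)] at h0
            exact h0
          · refine Finset.sum_eq_zero fun j _ => ?_
            have hz2 : (p j).coeff r = 0 := by
              by_cases hpj : p j = 0
              · rw [hpj, coeff_zero]
              · apply coeff_eq_zero_of_natDegree_lt
                have := (natDegree_lt_iff_degree_lt hpj).mpr (hdeg j)
                omega
            rw [hz2, mul_zero]
        intro hLI
        obtain ⟨j, hj⟩ := hane
        apply hj
        refine Fintype.linearIndependent_iff.mp hLI a ?_ j
        apply Polynomial.ext
        intro r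
        rw [finset_sum_coeff, coeff_zero]
        rw [← hblock r]
        refine Finset.sum_congr rfl fun j' _ => ?_
        rw [coeff_smul, smul_eq_mul]
      · -- w ≠ 0 : reduce to a smaller minor
        push_neg at hw
        obtain ⟨j₁, hj₁⟩ := hw
        have hj₁j₀ : j₁ ≠ j₀ := fun h => hj₁ (h ▸ hwj₀)
        obtain ⟨j₁', hj₁'⟩ := Fin.exists_succAbove_eq hj₁j₀
        set p' : Fin d → F[X] := p ∘ j₀.succAbove with hp'
        have hdet' : (Matrix.of (fun i j : Fin d =>
            (p' j).comp (C ((γ : F) ^ (i : ℕ)) * X))).det = 0 := by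
          apply hσinj
          rw [map_zero, RingHom.map_det]
          apply Matrix.exists_mulVec_eq_zero_iff.mp
          refine ⟨w ∘ j₀.succAbove, ?_, ?_⟩
          · intro h
            apply hj₁
            rw [← hj₁']
            exact congrFun h j₁'
          · funext i
            have h1 := hwrow i
            rw [Fin.sum_univ_succAbove
              (fun j => (p j).comp (C ((γ : F) ^ ((i : ℕ) + 1)) * X) * w j) j₀] at h1
            rw [hwj₀, mul_zero, zero_add] at h1
            simp only [Matrix.mulVec, dotProduct, RingHom.mapMatrix_apply,
              Matrix.map_apply, Matrix.of_apply, Pi.zero_apply, Function.comp_apply]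
            rw [← h1]
            refine Finset.sum_congr rfl fun j _ => ?_
            congr 1
            beta_reduce
            rw [hσ, comp_CmulX_comp, pow_succ]
            simp [hp']
        have hdeg' : ∀ j, (p' j).degree < ((Fintype.card F - 1 : ℕ) : WithBot ℕ) :=
          fun j => hdeg _
        intro hLI
        exact ih p' hdeg' hdet' (hLI.comp _ Fin.succAbove_right_injective)

/-- Folded Wronskian criterion (Guruswami–Kopparty): polynomials `p₁, …, p_d` of degree
less than `m ≤ q − 1` over `𝔽_q` are linearly independent iff the folded Wronskian
matrix `W(X)` with entries `W(X)_{i,j} = p_j(γ^{i−1}X)` has nonzero determinant,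
where `γ` generates `𝔽_q^*`. -/
theorem folded_wronskian_criterion {F : Type*} [Field F] [Fintype F] [DecidableEq F]
    (γ : Fˣ) (hγ : ∀ x : Fˣ, x ∈ Subgroup.zpowers γ)
    (d m : ℕ) (hm : m ≤ Fintype.card F - 1)
    (p : Fin d → Polynomial F) (hdeg : ∀ j, (p j).degree < (m : WithBot ℕ)) :
    LinearIndependent F p ↔
      (Matrix.of (fun i j : Fin d =>
        (p j).comp (Polynomial.C ((γ : F) ^ (i : ℕ)) * Polynomial.X))).det ≠ 0 := by
  constructor
  · intro hLI hdet
    refine folded_wronskian_key γ hγ d p (fun j => lt_of_lt_of_le (hdeg j) ?_) hdet hLI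
    exact_mod_cast hm
  · intro hdet
    by_contra hLI
    apply hdet
    apply Matrix.exists_mulVec_eq_zero_iff.mp
    obtain ⟨g, hg, i₀, hi₀⟩ := Fintype.not_linearIndependent_iff.mp hLI
    refine ⟨fun j => C (g j), ?_, ?_⟩
    · intro h
      apply hi₀
      have := congrFun h i₀
      simpa using this
    · funext i
      set σi : F[X] →+* F[X] :=
        Polynomial.eval₂RingHom Polynomial.C (C ((γ : F) ^ (i : ℕ)) * X) with hσdef
      have hσ : ∀ f : F[X], σi f = f.comp (C ((γ : F) ^ (i : ℕ)) * X) := fun f => rfl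
      simp only [Matrix.mulVec, dotProduct, Matrix.of_apply, Pi.zero_apply]
      have : ∑ j, (p j).comp (C ((γ : F) ^ (i : ℕ)) * X) * C (g j)
          = σi (∑ j, g j • p j) := by
        rw [map_sum]
        refine Finset.sum_congr rfl fun j _ => ?_
        rw [smul_eq_C_mul, map_mul, hσ, hσ, C_comp, mul_comm]
      rw [this, hg, map_zero]
end

section
/- Let H be a d-dimensional affine subspace of 𝔽_q[X]^{<m} with linearly independent direction polynomials h₁,…,h_d, let γ generate 𝔽_q^*, q > n, and fold evaluations at γ^{(i−1)t},…,γ^{(i−1)t+t−1} into symbol i ∈ [N], N = n/t. For i ∈ [N] let r_i be the rank of the t×d matrix A_i with entries (A_i)_{j,ℓ} = h_ℓ(γ^{(i−1)t+j−1}). If t ≥ d, then Σ_{i=1}^{N} (d − r_i) ≤ d·(m−1)/(t−d+1). -/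
open Polynomial Matrix

/-- If each column in `S` of a square matrix is entrywise divisible by `p`,
then `p ^ S.card` divides the determinant. -/
lemma pow_dvd_det_of_cols {R : Type*} [CommRing R] {d : ℕ}
    (M : Matrix (Fin d) (Fin d) R) (S : Finset (Fin d)) (p : R)
    (hcol : ∀ ℓ ∈ S, ∀ j, p ∣ M j ℓ) : p ^ S.card ∣ M.det := by
  rw [Matrix.det_apply]
  refine Finset.dvd_sum fun σ _ => ?_
  have h1 : p ^ S.card ∣ ∏ i, M (σ i) i := by
    calc p ^ S.card = ∏ i ∈ S, p := by rw [Finset.prod_const]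
    _ ∣ ∏ i ∈ S, M (σ i) i := Finset.prod_dvd_prod_of_dvd _ _ fun i hi => hcol i hi _
    _ ∣ ∏ i, M (σ i) i := Finset.prod_dvd_prod_of_subset _ _ _ (Finset.subset_univ S)
  obtain ⟨c, hc⟩ := h1
  exact ⟨Equiv.Perm.sign σ • c, by rw [hc, mul_smul_comm]⟩

/-- Casoratian criterion: if `h₁,…,h_d` admit no nontrivial linear dependence with
coefficients fixed by `σ`, then the Casoratian determinant is nonzero. -/
lemma casoratian_det_ne_zero {L : Type*} [Field L] (σ : L →+* L) :
    ∀ (d : ℕ) (h : Fin d → L),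
    (∀ c : Fin d → L, (∀ ℓ, σ (c ℓ) = c ℓ) → ∑ ℓ, c ℓ * h ℓ = 0 → c = 0) →
    (Matrix.of fun j ℓ : Fin d => (σ^[(j : ℕ)]) (h ℓ)).det ≠ 0 := by
  intro d
  induction d with
  | zero => intro h _; simp [Matrix.det_fin_zero]
  | succ d IH =>
    intro h hfix hdet0
    set h' : Fin d → L := fun ℓ => h ℓ.castSucc with hh'
    have hfix' : ∀ c : Fin d → L, (∀ ℓ, σ (c ℓ) = c ℓ) → ∑ ℓ, c ℓ * h' ℓ = 0 → c = 0 := by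
      intro c hc hsum
      have h0 : (Fin.snoc c 0 : Fin (d+1) → L) = 0 := by
        apply hfix
        · intro ℓ
          refine Fin.lastCases ?_ ?_ ℓ
          · simp
          · intro i; simp [Fin.snoc_castSucc, hc]
        · rw [Fin.sum_univ_castSucc]
          simpa [Fin.snoc_castSucc] using hsum
      funext ℓ
      simpa [Fin.snoc_castSucc] using congrFun h0 ℓ.castSucc
    have hdet' := IH h' hfix'
    set M' : Matrix (Fin d) (Fin d) L :=
      Matrix.of (fun j ℓ : Fin d => (σ^[(j : ℕ)]) (h' ℓ)) with hM'
    obtain ⟨c, hc0, hc⟩ := (Matrix.exists_mulVec_eq_zero_iff).2 hdet0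
    have hrow : ∀ j : Fin (d+1), ∑ ℓ, (σ^[(j : ℕ)]) (h ℓ) * c ℓ = 0 := by
      intro j
      simpa [Matrix.mulVec, dotProduct] using congrFun hc j
    have hclast : c (Fin.last d) ≠ 0 := by
      intro hl
      apply hc0
      have hi : (fun ℓ : Fin d => c ℓ.castSucc) = 0 := by
        by_contra hne
        refine hdet' ((Matrix.exists_mulVec_eq_zero_iff).1 ⟨_, hne, funext fun j => ?_⟩)
        have hr := hrow j.castSucc
        rw [Fin.sum_univ_castSucc, Fin.coe_castSucc, hl, mul_zero, add_zero] at hr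
        simpa [Matrix.mulVec, dotProduct, hM', hh'] using hr
      funext ℓ
      refine Fin.lastCases hl (fun i => congrFun hi i) ℓ
    set k : L := (c (Fin.last d))⁻¹ with hk
    set w : Fin (d+1) → L := fun ℓ => c ℓ * k with hw
    have hwlast : w (Fin.last d) = 1 := mul_inv_cancel₀ hclast
    have hroww : ∀ j : Fin (d+1), ∑ ℓ, (σ^[(j : ℕ)]) (h ℓ) * w ℓ = 0 := by
      intro j
      have : ∑ ℓ, (σ^[(j : ℕ)]) (h ℓ) * w ℓ
          = (∑ ℓ, (σ^[(j : ℕ)]) (h ℓ) * c ℓ) * k := by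
        rw [Finset.sum_mul]; exact Finset.sum_congr rfl fun ℓ _ => by rw [hw, mul_assoc]
      rw [this, hrow j, zero_mul]
    set u : Fin (d+1) → L := fun ℓ => w ℓ - σ (w ℓ) with hu
    have hulast : u (Fin.last d) = 0 := by simp [hu, hwlast]
    have hrowu : ∀ j : Fin d, ∑ ℓ, (σ^[(j : ℕ) + 1]) (h ℓ) * u ℓ = 0 := by
      intro j
      have R1 : ∑ ℓ, (σ^[(j : ℕ) + 1]) (h ℓ) * w ℓ = 0 := by
        simpa [Fin.val_succ] using hroww j.succ
      have R2 : ∑ ℓ, (σ^[(j : ℕ) + 1]) (h ℓ) * σ (w ℓ) = 0 := by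
        have := congrArg σ (hroww j.castSucc)
        rw [map_sum, map_zero] at this
        simpa [_root_.map_mul, Function.iterate_succ_apply', Fin.coe_castSucc] using this
      calc ∑ ℓ, (σ^[(j : ℕ) + 1]) (h ℓ) * u ℓ
          = (∑ ℓ, (σ^[(j : ℕ) + 1]) (h ℓ) * w ℓ)
            - ∑ ℓ, (σ^[(j : ℕ) + 1]) (h ℓ) * σ (w ℓ) := by
            rw [← Finset.sum_sub_distrib]
            exact Finset.sum_congr rfl fun ℓ _ => by rw [hu]; ring
        _ = 0 := by rw [R1, R2, sub_zero]
    have hui : (fun ℓ : Fin d => u ℓ.castSucc) = 0 := by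
      by_contra hne
      have hdm : (M'.map σ).det = 0 := by
        refine (Matrix.exists_mulVec_eq_zero_iff).1 ⟨_, hne, funext fun j => ?_⟩
        have hr := hrowu j
        rw [Fin.sum_univ_castSucc, hulast, mul_zero, add_zero] at hr
        simpa [Matrix.mulVec, dotProduct, hM', hh', Matrix.map_apply,
          Function.iterate_succ_apply'] using hr
      rw [show M'.map ⇑σ = σ.mapMatrix M' from rfl, ← RingHom.map_det] at hdm
      exact hdet' (σ.injective (by rw [hdm, map_zero]))
    have huz : u = 0 := by
      funext ℓ
      refine Fin.lastCases hulast (fun i => congrFun hui i) ℓ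
    have hwfix : ∀ ℓ, σ (w ℓ) = w ℓ := by
      intro ℓ
      have := congrFun huz ℓ
      simp only [hu, Pi.zero_apply, sub_eq_zero] at this
      exact this.symm
    have hw0 : w = 0 := by
      apply hfix w hwfix
      have := hroww 0
      simpa [mul_comm] using this
    have : (1 : L) = 0 := by rw [← hwlast, hw0]; rfl
    exact one_ne_zero this

lemma coeff_comp_C_mul_X {F : Type*} [CommRing F] (f : Polynomial F) (a : F) (u : ℕ) :
    (f.comp (C a * X)).coeff u = a ^ u * f.coeff u := by
  induction f using Polynomial.induction_on' with
  | add p q hp hq => simp [add_comp, hp, hq, mul_add]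
  | monomial n b =>
      rw [monomial_comp, mul_pow, ← C_pow, ← mul_assoc, ← C_mul, C_mul_X_pow_eq_monomial,
        coeff_monomial, coeff_monomial]
      by_cases h : n = u <;> simp [h, mul_comm]

/-- Simultaneous polynomial relations under all substitutions `X ↦ γ^j X` force an
`F`-linear dependence among the `h ℓ`. -/
lemma not_linearIndependent_of_rel {F : Type*} [Field F] {d m : ℕ}
    (γ : F) (hγ : Set.InjOn (γ ^ ·) (Set.Iio m))
    (h : Fin d → Polynomial F) (hdeg : ∀ ℓ, (h ℓ).degree < (m : WithBot ℕ))
    (P : Fin d → Polynomial F) (hP : P ≠ 0)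
    (hrel : ∀ j : ℕ, ∑ ℓ, P ℓ * (h ℓ).comp (C (γ ^ j) * X) = 0) :
    ¬ LinearIndependent F h := by
  have hcf : ∀ ℓ u, m ≤ u → (h ℓ).coeff u = 0 := fun ℓ u hu =>
    Polynomial.coeff_eq_zero_of_degree_lt
      (lt_of_lt_of_le (hdeg ℓ) (by exact_mod_cast hu))
  have key : ∀ (i u : ℕ), u < m → ∑ ℓ, (P ℓ).coeff i * (h ℓ).coeff u = 0 := by
    intro i u hum
    set N := i + u with hN
    set Bn : ℕ → F := fun x => ∑ ℓ, (P ℓ).coeff (N - x) * (h ℓ).coeff x with hBn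
    have hBn0 : ∀ x, m ≤ x → Bn x = 0 := by
      intro x hx
      simp only [hBn]
      exact Finset.sum_eq_zero fun ℓ _ => by rw [hcf ℓ x hx, mul_zero]
    have hrel2 : ∀ j : ℕ, ∑ x ∈ Finset.range (N + 1), (γ ^ j) ^ x * Bn x = 0 := by
      intro j
      have hcoeff := congrArg (fun p => p.coeff N) (hrel j)
      simp only [Polynomial.finset_sum_coeff, Polynomial.coeff_zero] at hcoeff
      have expand : ∀ ℓ : Fin d, (P ℓ * (h ℓ).comp (C (γ ^ j) * X)).coeff N
          = ∑ x ∈ Finset.range (N + 1),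
              (γ ^ j) ^ x * ((P ℓ).coeff (N - x) * (h ℓ).coeff x) := by
        intro ℓ
        rw [mul_comm, Polynomial.coeff_mul, Finset.Nat.sum_antidiagonal_eq_sum_range_succ_mk]
        exact Finset.sum_congr rfl fun x _ => by rw [coeff_comp_C_mul_X]; ring
      rw [Finset.sum_congr rfl (fun ℓ _ => expand ℓ), Finset.sum_comm] at hcoeff
      rw [← hcoeff]
      exact Finset.sum_congr rfl fun x _ => by rw [Finset.mul_sum]
    have hb : (fun v : Fin m => if (v : ℕ) ≤ N then Bn v else 0) = 0 := by
      refine Matrix.eq_zero_of_forall_index_sum_pow_mul_eq_zero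
        (f := fun v : Fin m => γ ^ (v : ℕ)) (fun v v' hvv' => ?_) (fun j => ?_)
      · exact Fin.ext (hγ (Set.mem_Iio.2 v.isLt) (Set.mem_Iio.2 v'.isLt) hvv')
      · have e1 : ∑ v : Fin m, (γ ^ (j : ℕ)) ^ (v : ℕ) *
            (if (v : ℕ) ≤ N then Bn v else 0)
            = ∑ x ∈ (Finset.range m) ∩ (Finset.range (N + 1)),
                (γ ^ (j : ℕ)) ^ x * Bn x := by
          rw [Fin.sum_univ_eq_sum_range (fun x => (γ ^ (j : ℕ)) ^ x *
            (if x ≤ N then Bn x else 0)), ← Finset.sum_ite_mem]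
          refine Finset.sum_congr rfl fun x _ => ?_
          by_cases hx : x ≤ N
          · rw [if_pos hx, if_pos (Finset.mem_range.2 (Nat.lt_succ_of_le hx))]
          · rw [if_neg hx, if_neg (fun hh => hx (Nat.lt_succ_iff.1 (Finset.mem_range.1 hh))),
              mul_zero]
        have e2 : ∑ x ∈ (Finset.range (N + 1)) ∩ (Finset.range m),
            (γ ^ (j : ℕ)) ^ x * Bn x
            = ∑ x ∈ Finset.range (N + 1), (γ ^ (j : ℕ)) ^ x * Bn x := by
          refine Finset.sum_subset Finset.inter_subset_left fun x hx hx' => ?_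
          have hxm : m ≤ x := by
            by_contra hxm
            exact hx' (Finset.mem_inter.2 ⟨hx, Finset.mem_range.2 (lt_of_not_ge hxm)⟩)
          rw [hBn0 x hxm, mul_zero]
        exact e1.trans (by rw [Finset.inter_comm, e2]; exact hrel2 (j : ℕ))
    have hu := congrFun hb ⟨u, hum⟩
    simp only [Pi.zero_apply] at hu
    rw [if_pos (by simp only [hN]; omega)] at hu
    have hNu : N - u = i := by omega
    simp only [hBn, hNu] at hu
    exact hu
  -- extract a nonzero coefficient of P
  have : ∃ ℓ₀ : Fin d, P ℓ₀ ≠ 0 := by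
    by_contra hc
    push_neg at hc
    exact hP (funext fun ℓ => hc ℓ)
  obtain ⟨ℓ₀, hℓ₀⟩ := this
  obtain ⟨i, hi⟩ : ∃ i, (P ℓ₀).coeff i ≠ 0 := by
    by_contra hc
    push_neg at hc
    exact hℓ₀ (Polynomial.ext fun i => hc i)
  intro hLI
  have hz := Fintype.linearIndependent_iff.1 hLI (fun ℓ => (P ℓ).coeff i) ?_ ℓ₀
  · exact hi hz
  · refine Polynomial.ext fun u => ?_
    rw [Polynomial.finset_sum_coeff]
    simp only [Polynomial.coeff_smul, smul_eq_mul, Polynomial.coeff_zero]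
    by_cases hum : u < m
    · exact key i u hum
    · exact Finset.sum_eq_zero fun ℓ _ => by
        rw [hcf ℓ u (le_of_not_gt hum), mul_zero]

lemma foldedWronskian_ne_zero {F : Type*} [Field F] {d m : ℕ}
    (γ : Fˣ) (hγm : Set.InjOn (((γ : F)) ^ ·) (Set.Iio m))
    (h : Fin d → Polynomial F) (hdeg : ∀ ℓ, (h ℓ).degree < (m : WithBot ℕ))
    (hind : LinearIndependent F h) :
    (Matrix.of fun j ℓ : Fin d =>
      (h ℓ).comp (C ((γ : F) ^ (j : ℕ)) * X)).det ≠ 0 := by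
  set a : F := (γ : F) with ha
  have ha0 : a ≠ 0 := Units.ne_zero γ
  have hpq : (C a * X).comp (C a⁻¹ * X) = X := by
    rw [mul_comp, C_comp, X_comp, ← mul_assoc, ← C_mul, mul_inv_cancel₀ ha0, C_1, one_mul]
  have hqp : (C a⁻¹ * X).comp (C a * X) = X := by
    rw [mul_comp, C_comp, X_comp, ← mul_assoc, ← C_mul, inv_mul_cancel₀ ha0, C_1, one_mul]
  set τ : Polynomial F ≃+* Polynomial F :=
    (Polynomial.algEquivOfCompEqX (C a * X) (C a⁻¹ * X) hpq hqp).toRingEquiv with hτ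
  have hτapp : ∀ f : Polynomial F, τ f = f.comp (C a * X) := by
    intro f
    simp [hτ, Polynomial.algEquivOfCompEqX, ← Polynomial.comp_eq_aeval]
  set L := FractionRing (Polynomial F)
  set σe : L ≃+* L := IsFractionRing.ringEquivOfRingEquiv τ with hσe
  set σ : L →+* L := σe.toRingHom with hσ
  have hσalg : ∀ f : Polynomial F, σ (algebraMap (Polynomial F) L f)
      = algebraMap (Polynomial F) L (f.comp (C a * X)) := by
    intro f
    have := IsFractionRing.ringEquivOfRingEquiv_algebraMap (K := L) (L := L) τ f
    rw [hσ, ← hτapp f]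
    exact this
  have hiter : ∀ (j : ℕ) (f : Polynomial F), (⇑σ)^[j] (algebraMap (Polynomial F) L f)
      = algebraMap (Polynomial F) L (f.comp (C (a ^ j) * X)) := by
    intro j
    induction j with
    | zero => intro f; simp
    | succ j IHj =>
        intro f
        rw [Function.iterate_succ_apply', IHj f, hσalg, Polynomial.comp_assoc]
        congr 2
        rw [mul_comp, C_comp, X_comp, ← mul_assoc, ← C_mul, ← pow_succ]
  set hL : Fin d → L := fun ℓ => algebraMap (Polynomial F) L (h ℓ) with hhL
  have hfix : ∀ c : Fin d → L, (∀ ℓ, σ (c ℓ) = c ℓ) → ∑ ℓ, c ℓ * hL ℓ = 0 → c = 0 := by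
    intro c hcfix hcsum
    by_contra hc0
    obtain ⟨ℓ₁, hℓ₁⟩ : ∃ ℓ, c ℓ ≠ 0 := by
      by_contra hcc; push_neg at hcc; exact hc0 (funext hcc)
    -- clear denominators
    have hrep : ∀ ℓ, ∃ (p : Polynomial F) (s : nonZeroDivisors (Polynomial F)),
        c ℓ * algebraMap (Polynomial F) L s = algebraMap (Polynomial F) L p := by
      intro ℓ
      obtain ⟨⟨p, s⟩, hps⟩ := IsLocalization.surj (nonZeroDivisors (Polynomial F)) (c ℓ)
      exact ⟨p, s, hps⟩
    choose num den hnd using hrep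
    set Q : Polynomial F := ∏ ℓ, (den ℓ : Polynomial F) with hQ
    have hQmem : Q ∈ nonZeroDivisors (Polynomial F) :=
      prod_mem (fun ℓ _ => (den ℓ).2)
    have hQ0 : Q ≠ 0 := nonZeroDivisors.ne_zero hQmem
    set P : Fin d → Polynomial F := fun ℓ =>
      num ℓ * ∏ ℓ' ∈ Finset.univ.erase ℓ, (den ℓ' : Polynomial F) with hPdef
    have hPmap : ∀ ℓ, algebraMap (Polynomial F) L (P ℓ) = c ℓ * algebraMap (Polynomial F) L Q := by
      intro ℓ
      have h1 : (den ℓ : Polynomial F) * ∏ ℓ' ∈ Finset.univ.erase ℓ, (den ℓ' : Polynomial F)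
          = Q := by
        rw [hQ]
        exact Finset.mul_prod_erase Finset.univ (fun ℓ' => (den ℓ' : Polynomial F))
          (Finset.mem_univ ℓ)
      calc algebraMap (Polynomial F) L (P ℓ)
          = algebraMap (Polynomial F) L (num ℓ)
            * algebraMap (Polynomial F) L (∏ ℓ' ∈ Finset.univ.erase ℓ, (den ℓ' : Polynomial F)) :=
            _root_.map_mul _ _ _
        _ = (c ℓ * algebraMap (Polynomial F) L (den ℓ))
            * algebraMap (Polynomial F) L (∏ ℓ' ∈ Finset.univ.erase ℓ, (den ℓ' : Polynomial F)) := by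
            rw [hnd ℓ]
        _ = c ℓ * (algebraMap (Polynomial F) L ((den ℓ : Polynomial F)
            * ∏ ℓ' ∈ Finset.univ.erase ℓ, (den ℓ' : Polynomial F))) := by
            rw [_root_.map_mul]; ring
        _ = c ℓ * algebraMap (Polynomial F) L Q := by rw [h1]
    have hrelL : ∀ j : ℕ, ∑ ℓ, c ℓ * (⇑σ)^[j] (hL ℓ) = 0 := by
      intro j
      induction j with
      | zero => simpa using hcsum
      | succ j IHj =>
          have := congrArg σ IHj
          rw [map_sum, map_zero] at this
          rw [← this]
          refine Finset.sum_congr rfl fun ℓ _ => ?_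
          rw [_root_.map_mul, hcfix ℓ, Function.iterate_succ_apply']
    have hrelF : ∀ j : ℕ, ∑ ℓ, P ℓ * (h ℓ).comp (C (a ^ j) * X) = 0 := by
      intro j
      apply IsFractionRing.injective (Polynomial F) L
      rw [map_sum, map_zero]
      have : ∀ ℓ : Fin d, algebraMap (Polynomial F) L (P ℓ * (h ℓ).comp (C (a ^ j) * X))
          = (c ℓ * (⇑σ)^[j] (hL ℓ)) * algebraMap (Polynomial F) L Q := by
        intro ℓ
        rw [_root_.map_mul, hPmap ℓ]
        simp only [hhL]
        rw [hiter j]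
        ring
      rw [Finset.sum_congr rfl fun ℓ _ => this ℓ, ← Finset.sum_mul, hrelL j, zero_mul]
    have hPne : P ≠ 0 := by
      intro hPz
      have : algebraMap (Polynomial F) L (P ℓ₁) = 0 := by rw [hPz]; simp
      rw [hPmap ℓ₁] at this
      rcases mul_eq_zero.1 this with hc | hq
      · exact hℓ₁ hc
      · exact hQ0 (IsFractionRing.injective (Polynomial F) L (by rw [hq, map_zero]))
    exact not_linearIndependent_of_rel a hγm h hdeg P hPne hrelF hind
  have hcas := casoratian_det_ne_zero σ d hL hfix
  intro hdet0
  apply hcas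
  have : (Matrix.of fun j ℓ : Fin d => (⇑σ)^[(j : ℕ)] (hL ℓ))
      = (algebraMap (Polynomial F) L).mapMatrix
          (Matrix.of fun j ℓ : Fin d => (h ℓ).comp (C (a ^ (j : ℕ)) * X)) := by
    ext j ℓ
    simp only [Matrix.of_apply, RingHom.mapMatrix_apply, Matrix.map_apply]
    rw [hhL, hiter]
  rw [this, ← RingHom.map_det, hdet0, map_zero]

lemma pow_dvd_det_of_subspace {F : Type*} [Field F] {d : ℕ}
    (M : Matrix (Fin d) (Fin d) (Polynomial F)) (a : F)
    (W : Submodule F (Fin d → F))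
    (hW : ∀ v ∈ W, ∀ j, Polynomial.eval a (∑ k, Polynomial.C (v k) * M j k) = 0) :
    (Polynomial.X - Polynomial.C a) ^ (Module.finrank F W) ∣ M.det := by
  classical
  obtain ⟨U, hU⟩ := Submodule.exists_isCompl W
  set s := Module.finrank F W with hs
  set u := Module.finrank F U with hu
  have hsu : s + u = d := by
    have := Submodule.finrank_add_eq_of_isCompl hU
    rwa [Module.finrank_fin_fun] at this
  set bW := Module.finBasis F W with hbW
  set bU := Module.finBasis F U with hbU
  set f : (Fin s ⊕ Fin u) → (Fin d → F) :=
    Sum.elim (fun i => (bW i : Fin d → F)) (fun i => (bU i : Fin d → F)) with hf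
  have hliW : LinearIndependent F (fun i => (bW i : Fin d → F)) :=
    bW.linearIndependent.map' W.subtype (Submodule.ker_subtype W)
  have hliU : LinearIndependent F (fun i => (bU i : Fin d → F)) :=
    bU.linearIndependent.map' U.subtype (Submodule.ker_subtype U)
  have hspanW : Submodule.span F (Set.range fun i => (bW i : Fin d → F)) ≤ W := by
    rw [Submodule.span_le]
    rintro x ⟨i, rfl⟩; exact (bW i).2
  have hspanU : Submodule.span F (Set.range fun i => (bU i : Fin d → F)) ≤ U := by
    rw [Submodule.span_le]
    rintro x ⟨i, rfl⟩; exact (bU i).2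
  have hli : LinearIndependent F f :=
    hliW.sum_type hliU (hU.disjoint.mono hspanW hspanU)
  set ε : Fin d ≃ (Fin s ⊕ Fin u) := (finCongr hsu.symm).trans finSumFinEquiv.symm with hε
  set vfam : Fin d → (Fin d → F) := fun ℓ => f (ε ℓ) with hvfam
  have hli2 : LinearIndependent F vfam := hli.comp ε ε.injective
  set Cm : Matrix (Fin d) (Fin d) F := Matrix.of (fun k ℓ => vfam ℓ k) with hCm
  have hCdet : Cm.det ≠ 0 := by
    intro h0
    obtain ⟨v, hv0, hv⟩ := Matrix.exists_mulVec_eq_zero_iff.2 h0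
    refine hv0 (funext fun ℓ => Fintype.linearIndependent_iff.1 hli2 v ?_ ℓ)
    funext k
    have h1 := congrFun hv k
    rw [Matrix.mulVec, dotProduct] at h1
    calc (∑ ℓ, v ℓ • vfam ℓ) k = ∑ ℓ, v ℓ * vfam ℓ k := by
          rw [Finset.sum_apply]
          exact Finset.sum_congr rfl fun ℓ _ => rfl
      _ = ∑ ℓ, Cm k ℓ * v ℓ := Finset.sum_congr rfl fun ℓ _ => by
          rw [hCm, Matrix.of_apply, mul_comm]
      _ = 0 := h1
  set S : Finset (Fin d) := Finset.univ.image (fun i : Fin s => ε.symm (Sum.inl i)) with hS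
  have hScard : S.card = s := by
    rw [hS, Finset.card_image_of_injective _ (fun x y hxy => Sum.inl_injective (ε.symm.injective hxy)),
      Finset.card_univ, Fintype.card_fin]
  have hdvd : ∀ ℓ ∈ S, ∀ j, (Polynomial.X - Polynomial.C a) ∣ (M * Cm.map Polynomial.C) j ℓ := by
    intro ℓ hℓ j
    obtain ⟨i, _, hi⟩ := Finset.mem_image.1 hℓ
    rw [Polynomial.dvd_iff_isRoot]
    have hv : vfam ℓ ∈ W := by
      rw [hvfam, ← hi]
      show f (ε (ε.symm (Sum.inl i))) ∈ W
      rw [Equiv.apply_symm_apply, hf]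
      exact (bW i).2
    have : (M * Cm.map Polynomial.C) j ℓ = ∑ k, Polynomial.C (vfam ℓ k) * M j k := by
      rw [Matrix.mul_apply]
      exact Finset.sum_congr rfl fun k _ => by
        rw [Matrix.map_apply, hCm, Matrix.of_apply, mul_comm]
    rw [Polynomial.IsRoot, this]
    exact hW _ hv j
  have hpow := pow_dvd_det_of_cols (M * Cm.map Polynomial.C) S _ hdvd
  rw [hScard, Matrix.det_mul] at hpow
  have hCu : IsUnit ((Cm.map Polynomial.C).det) := by
    have : (Cm.map Polynomial.C).det = Polynomial.C Cm.det := by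
      rw [show Cm.map ⇑Polynomial.C = (Polynomial.C (R := F)).mapMatrix Cm from rfl,
        ← RingHom.map_det]
    rw [this]
    exact Polynomial.isUnit_C.2 (Ne.isUnit hCdet)
  rw [hs]
  exact (IsUnit.dvd_mul_right hCu).1 hpow

/-- Sum of multiplicities at distinct points is at most the total count. -/
lemma sum_count_le_card {α β : Type*} [Fintype α] [DecidableEq β]
    (f : α → β) (hf : Function.Injective f) (M : Multiset β) :
    ∑ x : α, M.count (f x) ≤ Multiset.card M := by
  classical
  have himg : ∑ b ∈ Finset.univ.image f, M.count b = ∑ x : α, M.count (f x) :=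
    Finset.sum_image (fun x _ y _ hxy => hf hxy)
  rw [← himg]
  set T := Finset.univ.image f
  have h1 : ∑ b ∈ T, M.count b = ∑ b ∈ T ∩ M.toFinset, M.count b := by
    refine (Finset.sum_subset Finset.inter_subset_left fun b hb hb' => ?_).symm
    refine Multiset.count_eq_zero_of_notMem fun hbm => ?_
    exact hb' (Finset.mem_inter.2 ⟨hb, Multiset.mem_toFinset.2 hbm⟩)
  rw [h1]
  calc ∑ b ∈ T ∩ M.toFinset, M.count b
      ≤ ∑ b ∈ M.toFinset, M.count b :=
        Finset.sum_le_sum_of_subset Finset.inter_subset_right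
    _ = Multiset.card M := Multiset.toFinset_sum_count_eq M

lemma base_repr_inj {t : ℕ} {a b a' b' : ℕ} (hb : b < t) (hb' : b' < t)
    (hh : a * t + b = a' * t + b') : a = a' ∧ b = b' := by
  have ha : a = a' := by
    rcases lt_trichotomy a a' with hlt | heq | hgt
    · exfalso
      have h1 : (a + 1) * t ≤ a' * t := Nat.mul_le_mul_right t hlt
      have h2 : (a + 1) * t = a * t + t := by ring
      omega
    · exact heq
    · exfalso
      have h1 : (a' + 1) * t ≤ a * t := Nat.mul_le_mul_right t hgt
      have h2 : (a' + 1) * t = a' * t + t := by ring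
      omega
  subst ha
  omega

/-- Rank-deficit bound via folded Wronskians (Guruswami–Kopparty).  Let
`h₁, …, h_d ∈ 𝔽_q[X]^{<m}` be linearly independent, `γ` a generator of `𝔽_q^*`,
`q > n = N·t` and `t ≥ d`.  For `i ∈ [N]` let `r_i` be the rank of the `t×d` matrix
`A_i` with entries `(A_i)_{j,ℓ} = h_ℓ(γ^{(i−1)t+j−1})`.  Then
`Σ_i (d − r_i) ≤ d(m−1)/(t−d+1)`. -/
theorem rank_deficit_bound {F : Type*} [Field F] [Fintype F] [DecidableEq F]
    (γ : Fˣ) (hγ : ∀ x : Fˣ, x ∈ Subgroup.zpowers γ)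
    (d t m N n : ℕ) (hn : n = N * t) (hqn : n < Fintype.card F) (htd : d ≤ t)
    (h : Fin d → Polynomial F)
    (hdeg : ∀ ℓ, (h ℓ).degree < (m : WithBot ℕ))
    (hind : LinearIndependent F h) :
    (∑ i : Fin N, ((d : ℝ) -
        ((Matrix.of (fun (j : Fin t) (ℓ : Fin d) =>
          (h ℓ).eval ((γ : F) ^ (i.1 * t + j.1)))).rank : ℝ)))
      ≤ (d : ℝ) * ((m : ℝ) - 1) / ((t : ℝ) - (d : ℝ) + 1) := by
  classical
  by_cases hd0 : d = 0
  · subst hd0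
    have hz : ∀ i : Fin N,
        ((Matrix.of (fun (j : Fin t) (ℓ : Fin 0) =>
          (h ℓ).eval ((γ : F) ^ (i.1 * t + j.1)))).rank) = 0 :=
      fun i => Nat.le_zero.1 (Matrix.rank_le_width _)
    simp only [hz]
    simp
  have hd1 : 1 ≤ d := Nat.one_le_iff_ne_zero.2 hd0
  set q := Fintype.card F with hq
  have hq2 : 2 ≤ q := Fintype.one_lt_card
  -- m ≥ 1
  have hm1 : 1 ≤ m := by
    by_contra hm
    push_neg at hm
    interval_cases m
    have h0 := hind.ne_zero ⟨0, hd1⟩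
    have := hdeg ⟨0, hd1⟩
    rw [Nat.cast_zero] at this
    exact absurd (Polynomial.zero_le_degree_iff.2 h0) (not_le.2 this)
  -- rank function
  set r : Fin N → ℕ := fun i =>
    ((Matrix.of (fun (j : Fin t) (ℓ : Fin d) =>
      (h ℓ).eval ((γ : F) ^ (i.1 * t + j.1)))).rank) with hrdef
  have hrd : ∀ i, r i ≤ d := fun i => Matrix.rank_le_width _
  -- key inequality in ℕ
  have key : (∑ i, (d - r i)) * (t - d + 1) ≤ d * (m - 1) := by
    by_cases hm : m < q
    · -- main case: folded Wronskian argument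
      -- order of γ
      have hord : orderOf γ = q - 1 := by
        rw [orderOf_eq_card_of_forall_mem_zpowers hγ, Nat.card_units, Nat.card_eq_fintype_card]
      have hinjF : Set.InjOn (fun k => (γ : F) ^ k) (Set.Iio (q - 1)) := by
        intro x hx y hy hxy
        have hux : ((γ ^ x : Fˣ) : F) = ((γ ^ y : Fˣ) : F) := by
          rw [Units.val_pow_eq_pow_val, Units.val_pow_eq_pow_val]
          exact hxy
        have : γ ^ x = γ ^ y := Units.ext hux
        rw [← hord] at hx hy
        exact pow_injOn_Iio_orderOf hx hy this
      have hmq : m ≤ q - 1 := by omega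
      have hinjm : Set.InjOn (((γ : F)) ^ ·) (Set.Iio m) := fun x hx y hy hxy =>
        hinjF (lt_of_lt_of_le hx hmq) (lt_of_lt_of_le hy hmq) hxy
      set Wr : Matrix (Fin d) (Fin d) (Polynomial F) :=
        Matrix.of (fun j ℓ : Fin d => (h ℓ).comp (C ((γ : F) ^ (j : ℕ)) * X)) with hWr
      set D : Polynomial F := Wr.det with hD
      have hD0 : D ≠ 0 := foldedWronskian_ne_zero γ hinjm h hdeg hind
      -- degree bound
      have hdegD : D.natDegree ≤ d * (m - 1) := by
        rw [hD, Matrix.det_apply']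
        refine Polynomial.natDegree_sum_le_of_forall_le _ _ fun σ _ => ?_
        refine (Polynomial.natDegree_mul_le).trans ?_
        rw [Polynomial.natDegree_intCast, zero_add]
        refine (Polynomial.natDegree_prod_le _ _).trans ?_
        have hent : ∀ j : Fin d, (Wr (σ j) j).natDegree ≤ m - 1 := by
          intro j
          rw [hWr]
          show ((h j).comp (C ((γ : F) ^ ((σ j : Fin d) : ℕ)) * X)).natDegree ≤ m - 1
          rw [Polynomial.natDegree_comp,
            Polynomial.natDegree_C_mul_X _ (pow_ne_zero _ (Units.ne_zero γ)), mul_one]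
          by_cases hz : h j = 0
          · rw [hz, Polynomial.natDegree_zero]; omega
          · have := (Polynomial.natDegree_lt_iff_degree_lt hz).2 (hdeg j)
            omega
        calc ∑ j, (Wr (σ j) j).natDegree ≤ ∑ _j : Fin d, (m - 1) :=
              Finset.sum_le_sum fun j _ => hent j
          _ = d * (m - 1) := by
            rw [Finset.sum_const, Finset.card_univ, Fintype.card_fin, smul_eq_mul]
      -- multiplicities
      have hmult : ∀ p : Fin N × Fin (t - d + 1),
          (Polynomial.X - Polynomial.C ((γ : F) ^ (p.1.1 * t + p.2.1))) ^ (d - r p.1) ∣ D := by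
        intro p
        set A : Matrix (Fin t) (Fin d) F :=
          Matrix.of (fun (j : Fin t) (ℓ : Fin d) =>
            (h ℓ).eval ((γ : F) ^ (p.1.1 * t + j.1))) with hA
        set W : Submodule F (Fin d → F) := LinearMap.ker A.mulVecLin with hWk
        have hfr : Module.finrank F W = d - r p.1 := by
          have h1 := LinearMap.finrank_range_add_finrank_ker A.mulVecLin
          rw [Module.finrank_fin_fun] at h1
          have h2 : r p.1 = Module.finrank F (LinearMap.range A.mulVecLin) := rfl
          show Module.finrank F (LinearMap.ker A.mulVecLin) = d - r p.1
          omega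
        rw [← hfr]
        refine pow_dvd_det_of_subspace Wr _ W ?_
        intro v hv j
        have hvk : A.mulVec v = 0 := LinearMap.mem_ker.1 hv
        have hrow : ∀ row : Fin t,
            ∑ k, v k * (h k).eval ((γ : F) ^ (p.1.1 * t + row.1)) = 0 := by
          intro row
          have := congrFun hvk row
          rw [Matrix.mulVec, dotProduct] at this
          simp only [Pi.zero_apply] at this
          rw [← this]
          exact Finset.sum_congr rfl fun k _ => by rw [hA, Matrix.of_apply, mul_comm]
        have hjr : p.2.1 + j.1 < t := by
          have h1 := p.2.2
          have h2 := j.2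
          omega
        have := hrow ⟨p.2.1 + j.1, hjr⟩
        rw [← this]
        rw [Polynomial.eval_finset_sum]
        refine Finset.sum_congr rfl fun k _ => ?_
        rw [Polynomial.eval_mul, Polynomial.eval_C, hWr]
        show v k * Polynomial.eval _ ((h k).comp (C ((γ : F) ^ (j : ℕ)) * X)) = _
        rw [Polynomial.eval_comp, Polynomial.eval_mul, Polynomial.eval_C, Polynomial.eval_X]
        congr 2
        rw [← pow_add]
        congr 1
        simp only [Fin.val_mk]
        omega
      -- counting roots
      have hcount : (∑ i, (d - r i)) * (t - d + 1) ≤ D.natDegree := by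
        have hptinj : Function.Injective
            (fun p : Fin N × Fin (t - d + 1) => (γ : F) ^ (p.1.1 * t + p.2.1)) := by
          intro p p' hpp'
          have hlt : ∀ pp : Fin N × Fin (t - d + 1), pp.1.1 * t + pp.2.1 < q - 1 := by
            intro pp
            have h1 : pp.1.1 * t + pp.2.1 < (pp.1.1 + 1) * t := by
              have := pp.2.2
              have h2 : pp.2.1 < t := by omega
              nlinarith
            have h2 : (pp.1.1 + 1) * t ≤ N * t := Nat.mul_le_mul_right t pp.1.2
            omega
          have he : p.1.1 * t + p.2.1 = p'.1.1 * t + p'.2.1 :=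
            hinjF (hlt p) (hlt p') hpp'
          obtain ⟨h1, h2⟩ := base_repr_inj
            (by have := p.2.2; omega) (by have := p'.2.2; omega) he
          exact Prod.ext (Fin.ext h1) (Fin.ext h2)
        calc (∑ i, (d - r i)) * (t - d + 1)
            = ∑ i, (d - r i) * (t - d + 1) := Finset.sum_mul _ _ _
          _ = ∑ p : Fin N × Fin (t - d + 1), (d - r p.1) := by
              rw [Fintype.sum_prod_type]
              refine Finset.sum_congr rfl fun i _ => ?_
              have hc : ∑ y : Fin (t - d + 1), (d - r (i, y).1)
                  = ∑ _y : Fin (t - d + 1), (d - r i) := rfl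
              rw [hc, Finset.sum_const, Finset.card_univ, Fintype.card_fin, smul_eq_mul, mul_comm]
          _ ≤ ∑ p : Fin N × Fin (t - d + 1),
                D.roots.count ((γ : F) ^ (p.1.1 * t + p.2.1)) := by
              refine Finset.sum_le_sum fun p _ => ?_
              rw [Polynomial.count_roots]
              exact (Polynomial.le_rootMultiplicity_iff hD0).2 (hmult p)
          _ ≤ Multiset.card D.roots := sum_count_le_card _ hptinj _
          _ ≤ D.natDegree := Polynomial.card_roots' D
      exact hcount.trans hdegD
    · -- trivial case q ≤ m
      push_neg at hm
      have h1 : (∑ i, (d - r i)) ≤ N * d := by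
        calc (∑ i, (d - r i)) ≤ ∑ _i : Fin N, d :=
              Finset.sum_le_sum fun i _ => Nat.sub_le d (r i)
          _ = N * d := by
            rw [Finset.sum_const, Finset.card_univ, Fintype.card_fin, smul_eq_mul]
      have h2 : N * (t - d + 1) ≤ m - 1 := by
        have h3 : t - d + 1 ≤ t := by omega
        have h4 : N * (t - d + 1) ≤ N * t := Nat.mul_le_mul_left N h3
        omega
      calc (∑ i, (d - r i)) * (t - d + 1) ≤ (N * d) * (t - d + 1) :=
            Nat.mul_le_mul_right _ h1
        _ = d * (N * (t - d + 1)) := by ring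
        _ ≤ d * (m - 1) := Nat.mul_le_mul_left d h2
  -- conversion to ℝ
  have hrw : (∑ i : Fin N, ((d : ℝ) -
      ((Matrix.of (fun (j : Fin t) (ℓ : Fin d) =>
        (h ℓ).eval ((γ : F) ^ (i.1 * t + j.1)))).rank : ℝ)))
      = ((∑ i, (d - r i) : ℕ) : ℝ) := by
    rw [Nat.cast_sum]
    refine Finset.sum_congr rfl fun i _ => ?_
    rw [Nat.cast_sub (hrd i)]
  rw [hrw]
  have hden : (t : ℝ) - (d : ℝ) + 1 = ((t - d + 1 : ℕ) : ℝ) := by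
    push_cast [Nat.cast_sub htd]
    ring
  have hdenpos : (0 : ℝ) < (t : ℝ) - (d : ℝ) + 1 := by
    rw [hden]
    have hpos : 0 < t - d + 1 := by omega
    exact_mod_cast hpos
  rw [le_div_iff₀ hdenpos]
  have hnum : (d : ℝ) * ((m : ℝ) - 1) = ((d * (m - 1) : ℕ) : ℝ) := by
    push_cast [Nat.cast_sub hm1]
    ring
  rw [hnum, hden]
  exact_mod_cast key
end
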